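/- arXiv:1909.05605 — 5 statements merged into one kernel-verified Lean document; each statement's English description precedes it below -/
import Mathlib

section
/- Let m ≥ 2 be an integer with m ≡ 1 (mod 4), let f(x) = x^m on ℤ_2, and let t = ν_2(m − 1) (so t ≥ 2). Then for every integer l ≥ 0, for every sign ε ∈ {1, −1}, and for every x ∈ ε + 2^(l+2) + 2^(l+3)ℤ_2, one has ν_2(x^m − x) = t + l + 2. -/
open Finset

namespace Aux2

lemma two_not_unit : ¬ IsUnit (2 : ℤ_[2]) := by
  rw [PadicInt.isUnit_iff]
  have : ‖(2:ℤ_[2])‖ = ((2:ℕ):ℝ)⁻¹ := by exact_mod_cast PadicInt.norm_p (p := 2)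
  rw [this]; norm_num

lemma isUnit_iff_not_dvd (x : ℤ_[2]) : IsUnit x ↔ ¬ (2 : ℤ_[2]) ∣ x := by
  rw [PadicInt.isUnit_iff]
  constructor
  · intro h hd
    have := (PadicInt.norm_lt_one_iff_dvd x).2 (by exact_mod_cast hd)
    simp [h] at this
  · intro h
    have h1 : ¬ ‖x‖ < 1 := fun hc => h (by exact_mod_cast (PadicInt.norm_lt_one_iff_dvd x).1 hc)
    have h2 := PadicInt.norm_le_one x
    rcases lt_or_eq_of_le h2 with h3 | h3
    · exact absurd h3 h1
    · exact h3

lemma valuation_of_unit {u : ℤ_[2]} (hu : IsUnit u) : u.valuation = 0 := by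
  have hne : u ≠ 0 := hu.ne_zero
  have h1 : ‖u‖ = 1 := PadicInt.isUnit_iff.1 hu
  have h2 := PadicInt.norm_eq_zpow_neg_valuation hne
  rw [h1] at h2
  have h3 : ((2:ℕ) : ℝ) ^ (-(u.valuation:ℤ)) = ((2:ℕ):ℝ) ^ (0:ℤ) := by rw [← h2]; norm_num
  have := zpow_right_injective₀ (by norm_num : (0:ℝ) < ((2:ℕ):ℝ)) (by norm_num : ((2:ℕ):ℝ) ≠ 1) h3
  omega

lemma unit_cast_odd (k : ℕ) (hk : Odd k) : IsUnit ((k : ℤ_[2])) := by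
  rw [isUnit_iff_not_dvd]
  obtain ⟨j, hj⟩ := hk
  intro hd
  have hk2 : ((k:ℤ_[2])) = 2 * j + 1 := by rw [hj]; push_cast; ring
  rw [hk2] at hd
  have : (2:ℤ_[2]) ∣ 1 := (dvd_add_right (Dvd.intro _ rfl)).mp hd
  exact two_not_unit (isUnit_of_dvd_one this)

lemma key (a : ℕ) : ∀ (c : ℕ), 2 ≤ c → ∀ (w : ℤ_[2]), IsUnit w → ∀ (k : ℕ), Odd k →
    ∃ u : ℤ_[2], IsUnit u ∧ (1 + 2^c * w)^(2^a * k) - 1 = 2^(a+c) * u := by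
  induction a with
  | zero =>
    intro c hc w hw k hk
    set v : ℤ_[2] := 2^c * w with hv
    have hgeo : (∑ i ∈ range k, (1+v)^i) * ((1+v) - 1) = (1+v)^k - 1 := geom_sum_mul _ _
    refine ⟨w * (∑ i ∈ range k, (1+v)^i), ?_, ?_⟩
    · apply hw.mul
      rw [isUnit_iff_not_dvd]
      intro hdvd
      have h2v : (2:ℤ_[2]) ∣ v := ⟨2^(c-1) * w, by rw [hv, ← mul_assoc, ← pow_succ']; congr 2; omega⟩
      have hsum : (2:ℤ_[2]) ∣ (∑ i ∈ range k, (1+v)^i) - k := by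
        have hkc : ((k:ℤ_[2])) = ∑ _i ∈ range k, (1:ℤ_[2]) := by simp
        rw [hkc, ← Finset.sum_sub_distrib]
        apply Finset.dvd_sum
        intro i _
        have hvd : v ∣ (1+v)^i - 1^i := by simpa using sub_dvd_pow_sub_pow (1+v) 1 i
        exact h2v.trans (by simpa using hvd)
      have : (2:ℤ_[2]) ∣ (k:ℤ_[2]) := by simpa using dvd_sub hdvd hsum
      exact (isUnit_iff_not_dvd _).1 (unit_cast_odd k hk) this
    · rw [pow_zero, one_mul, zero_add, ← hgeo]
      rw [hv]; ring
  | succ a ih =>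
    intro c hc w hw k hk
    have h1 : (2:ℤ_[2])^(c+1) * 2^(c-1) = 2^c * 2^c := by
      rw [← pow_add, ← pow_add]; congr 1; omega
    have h2 : (2:ℤ_[2])^(c+1) = 2^c * 2 := pow_succ 2 c
    have hsq : (1 + 2^c * w)^2 = 1 + 2^(c+1) * (w + 2^(c-1) * w^2) := by
      linear_combination -(w^2) * h1 - w * h2
    have hw' : IsUnit (w + 2^(c-1) * w^2) := by
      rw [isUnit_iff_not_dvd]
      intro hd
      have h2d : (2:ℤ_[2]) ∣ 2^(c-1) * w^2 := by
        refine dvd_mul_of_dvd_left ?_ _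
        exact dvd_pow_self 2 (by omega : c - 1 ≠ 0)
      have : (2:ℤ_[2]) ∣ w := by
        have := dvd_sub hd h2d
        simpa using this
      exact (isUnit_iff_not_dvd _).1 hw this
    obtain ⟨u, hu, heq⟩ := ih (c+1) (by omega) _ hw' k hk
    refine ⟨u, hu, ?_⟩
    have hpow : (1 + 2^c * w)^(2^(a+1) * k) = ((1 + 2^c * w)^2)^(2^a * k) := by
      rw [← pow_mul]; congr 1; ring
    rw [show a+1+c = a+(c+1) from by omega, ← heq, hpow, hsq]

end Aux2

/-- For `m ≡ 1 (mod 4)`, `t = ν_2(m-1) ≥ 2`, and any `l ≥ 0`, `ε = ±1`, and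
`x ∈ ε + 2^(l+2) + 2^(l+3)ℤ_2`, one has `ν_2(x^m - x) = t + l + 2`. -/
theorem monomial_Z2_one_mod_four_valuation (m : ℕ) (hm : 2 ≤ m) (hmod : m % 4 = 1) :
    2 ≤ padicValNat 2 (m - 1) ∧
    ∀ l : ℕ, ∀ ε : ℤ_[2], (ε = 1 ∨ ε = -1) →
      ∀ x : ℤ_[2], (2 : ℤ_[2]) ^ (l + 3) ∣ (x - (ε + 2 ^ (l + 2))) →
        (x ^ m - x).valuation = (padicValNat 2 (m - 1) : ℤ) + l + 2 := by
  have hm5 : 5 ≤ m := by omega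
  have hm1 : m - 1 ≠ 0 := by omega
  have h4 : 2^2 ∣ m - 1 := by omega
  set t := padicValNat 2 (m - 1) with ht
  have ht2 : 2 ≤ t := (padicValNat_dvd_iff_le hm1).1 h4
  refine ⟨ht2, ?_⟩
  -- odd part
  have hdvd : 2^t ∣ m - 1 := pow_padicValNat_dvd
  set k' := (m - 1) / 2^t with hk'
  have hmk : m - 1 = 2^t * k' := by rw [hk', Nat.mul_div_cancel' hdvd]
  have hkodd : Odd k' := by
    rw [Nat.odd_iff]
    by_contra h
    have h2k : 2 ∣ k' := by omega
    have : 2^(t+1) ∣ m - 1 := by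
      obtain ⟨j, hj⟩ := h2k
      exact ⟨j, by rw [hmk, hj]; ring⟩
    have := (padicValNat_dvd_iff_le hm1).1 this
    omega
  intro l ε hε x hx
  obtain ⟨z, hz⟩ := hx
  have hxe : x = ε + 2^(l+2) + 2^(l+3) * z := by linear_combination hz
  have hε2 : ε^2 = 1 := by rcases hε with h | h <;> rw [h] <;> ring
  have hεu : IsUnit ε := by
    rcases hε with h | h <;> rw [h]
    · exact isUnit_one
    · exact IsUnit.neg isUnit_one
  -- x is a unit
  have hxu : IsUnit x := by
    rw [Aux2.isUnit_iff_not_dvd]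
    intro hd
    have h2r : (2:ℤ_[2]) ∣ 2^(l+2) + 2^(l+3) * z := by
      refine dvd_add (dvd_pow_self 2 (by omega)) (dvd_mul_of_dvd_left (dvd_pow_self 2 (by omega)) _)
    have : (2:ℤ_[2]) ∣ ε := by
      have := dvd_sub hd h2r
      rw [hxe] at this
      simpa using this
    exact (Aux2.isUnit_iff_not_dvd _).1 hεu this
  -- x^2 = 1 + 2^(l+3) * W
  set W : ℤ_[2] := ε * (1 + 2*z) + 2^(l+1) * (1 + 2*z)^2 with hW
  have hsq : x^2 = 1 + 2^(l+3) * W := by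
    have e1 : (2:ℤ_[2])^(l+3) * 2^(l+1) = 2^(l+2) * 2^(l+2) := by
      rw [← pow_add, ← pow_add]; congr 1; omega
    have e2 : (2:ℤ_[2])^(l+3) = 2^(l+2) * 2 := pow_succ 2 (l+2)
    rw [hxe, hW]
    linear_combination hε2 - (1+2*z)^2 * e1 - (ε*(1+2*z) + z*2^(l+2)*2 + z^2*2^(l+2)*4) * e2
  have hWu : IsUnit W := by
    rw [Aux2.isUnit_iff_not_dvd]
    intro hd
    have h2r : (2:ℤ_[2]) ∣ 2^(l+1) * (1 + 2*z)^2 :=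
      dvd_mul_of_dvd_left (dvd_pow_self 2 (by omega)) _
    have hdo : (2:ℤ_[2]) ∣ ε * (1 + 2*z) := by
      have h := dvd_sub hd h2r
      have he : ε*(1+2*z) + 2^(l+1)*(1+2*z)^2 - 2^(l+1)*(1+2*z)^2 = ε*(1+2*z) := by ring
      rwa [he] at h
    have hou : IsUnit (ε * (1 + 2*z)) := by
      refine hεu.mul ?_
      rw [Aux2.isUnit_iff_not_dvd]
      intro h1
      have : (2:ℤ_[2]) ∣ 1 := by
        have := dvd_sub h1 (Dvd.intro z rfl)
        simpa using this
      exact Aux2.two_not_unit (isUnit_of_dvd_one this)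
    exact (Aux2.isUnit_iff_not_dvd _).1 hou hdo
  -- apply key lemma
  obtain ⟨u, hu, hequ⟩ := Aux2.key (t-1) (l+3) (by omega) W hWu k' hkodd
  have hexp : x^(m-1) - 1 = 2^(t+l+2) * u := by
    have hpm : x^(m-1) = (x^2)^(2^(t-1) * k') := by
      rw [← pow_mul]
      congr 1
      have : 2 * (2^(t-1) * k') = 2^t * k' := by
        rw [← mul_assoc, ← pow_succ']
        congr 2
        omega
      rw [this]
      exact hmk
    rw [show t+l+2 = t-1+(l+3) from by omega, hpm, hsq, hequ]
  have hfinal : x^m - x = 2^(t+l+2) * (x * u) := by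
    have hxm : x^m = x * x^(m-1) := by
      rw [← pow_succ']
      congr 1
      omega
    calc x^m - x = x * (x^(m-1) - 1) := by rw [hxm]; ring
    _ = x * (2^(t+l+2) * u) := by rw [hexp]
    _ = 2^(t+l+2) * (x * u) := by ring
  rw [hfinal]
  have hxuu : IsUnit (x * u) := hxu.mul hu
  have h2cast : (2:ℤ_[2]) = ((2:ℕ) : ℤ_[2]) := by norm_num
  rw [h2cast, PadicInt.valuation_p_pow_mul _ _ hxuu.ne_zero, Aux2.valuation_of_unit hxuu]
  push_cast
  ring
end

section
/- Let m ≥ 2 be an integer with m ≡ 3 (mod 4), let f(x) = x^m on ℤ_2, and let t = ν_2(m + 1) (so t ≥ 2). Then for every integer l ≥ 0, every sign ε ∈ {1, −1}, every a ∈ {1, 3}, and every x ∈ ε + 2^(l+2)·a + 2^(l+4)ℤ_2, one has ν_2(x^(m²) − x) = t + l + 3. -/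
lemma val_unit (w : ℤ_[2]) (hw : ¬(2:ℤ_[2]) ∣ w) : w.valuation = 0 := by
  have h2 : ((2:ℕ) : ℤ_[2]) = (2:ℤ_[2]) := by norm_cast
  have h1 : ‖w‖ = 1 := by
    refine le_antisymm (PadicInt.norm_le_one w) (not_lt.1 fun h => hw ?_)
    rw [PadicInt.norm_lt_one_iff_dvd, h2] at h; exact h
  have hw0 : w ≠ 0 := by rintro rfl; exact hw (dvd_zero _)
  have h3 := PadicInt.norm_eq_zpow_neg_valuation hw0
  rw [h1] at h3
  have h4 : ((2:ℝ)) ^ (-(w.valuation : ℤ)) = (2:ℝ)^(0:ℤ) := by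
    rw [zpow_zero]; exact_mod_cast h3.symm
  have := zpow_right_injective₀ (by norm_num : (0:ℝ) < 2) (by norm_num : (2:ℝ) ≠ 1) h4
  omega

lemma val_pow_mul (n : ℕ) (w : ℤ_[2]) (hw : ¬(2:ℤ_[2]) ∣ w) :
    ((2:ℤ_[2])^n * w).valuation = n := by
  have h2 : ((2:ℕ) : ℤ_[2]) = (2:ℤ_[2]) := by norm_cast
  have hw0 : w ≠ 0 := by rintro rfl; exact hw (dvd_zero _)
  rw [← h2, PadicInt.valuation_p_pow_mul n w hw0, val_unit w hw, add_zero]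

lemma two_prime : Prime (2:ℤ_[2]) := by
  have h2 : ((2:ℕ) : ℤ_[2]) = (2:ℤ_[2]) := by norm_cast
  rw [← h2]; exact PadicInt.prime_p

lemma not_dvd_nat_odd (k : ℕ) (hk : k % 2 = 1) : ¬ (2:ℤ_[2]) ∣ (k : ℤ_[2]) := by
  intro h
  have h2 : ((2:ℕ) : ℤ_[2]) = (2:ℤ_[2]) := by norm_cast
  rw [← h2, ← PadicInt.norm_lt_one_iff_dvd] at h
  have : ((k:ℤ) : ℤ_[2]) = ((k:ℕ) : ℤ_[2]) := by push_cast; ring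
  rw [← this, PadicInt.norm_int_lt_one_iff_dvd] at h
  omega

lemma key : ∀ k : ℕ, k ≠ 0 → ∀ r : ℕ, 2 ≤ r → ∀ c : ℤ_[2], ¬ (2:ℤ_[2]) ∣ c →
    ∃ c', ¬ (2:ℤ_[2]) ∣ c' ∧
      (1 + 2^r * c)^k - 1 = 2^(r + padicValNat 2 k) * c' := by
  intro k
  induction k using Nat.strong_induction_on with
  | _ k IH =>
  intro hk r hr c hc
  rcases Nat.even_or_odd k with ⟨j, rfl⟩ | hodd
  · -- even case
    have hj : j ≠ 0 := by omega
    obtain ⟨s, rfl⟩ : ∃ s, r = s + 2 := ⟨r - 2, by omega⟩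
    have hsq : (1 + 2^(s+2) * c)^2 = 1 + 2^(s+2+1) * (c * (1 + 2^(s+2-1) * c)) := by
      have h1 : s+2-1 = s+1 := by omega
      rw [h1]; ring
    have hc1 : ¬ (2:ℤ_[2]) ∣ (c * (1 + 2^(s+2-1) * c)) := by
      intro h
      rcases (two_prime.dvd_mul).1 h with h | h
      · exact hc h
      · have : (2:ℤ_[2]) ∣ 1 := by
          have hd : (2:ℤ_[2]) ∣ 2^(s+2-1) * c :=
            Dvd.dvd.mul_right (dvd_pow_self 2 (by omega : s+2-1 ≠ 0)) c
          have := dvd_sub h hd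
          simpa using this
        exact not_dvd_nat_odd 1 rfl (by simpa using this)
    obtain ⟨c', hc', heq⟩ := IH j (by omega) hj (s+2+1) (by omega) _ hc1
    refine ⟨c', hc', ?_⟩
    have hkk : j + j = 2 * j := by ring
    rw [hkk, pow_mul, hsq, heq]
    have hv : padicValNat 2 (2 * j) = 1 + padicValNat 2 j := by
      rw [padicValNat.mul (by norm_num) hj]
      simp [padicValNat.self]
    rw [hv]
    ring_nf
  · -- odd case
    have hv : padicValNat 2 k = 0 := by
      apply padicValNat.eq_zero_of_not_dvd
      rw [Nat.odd_iff] at hodd; omega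
    set u : ℤ_[2] := 2^r * c with hu
    have hgeom : (1 + u)^k - 1 = (∑ i ∈ Finset.range k, (1+u)^i) * u := by
      have := geom_sum_mul (1 + u) k
      simpa using this.symm
    set S : ℤ_[2] := ∑ i ∈ Finset.range k, (1+u)^i with hS
    have hSunit : ¬ (2:ℤ_[2]) ∣ S := by
      intro h
      have hdiff : (2:ℤ_[2]) ∣ (S - k) := by
        have : S - (k:ℤ_[2]) = ∑ i ∈ Finset.range k, ((1+u)^i - 1) := by
          rw [hS, Finset.sum_sub_distrib]
          simp
        rw [this]
        apply Finset.dvd_sum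
        intro i _
        have h1 : u ∣ (1+u)^i - 1 := by
          have := sub_dvd_pow_sub_pow (1+u) 1 i
          simpa using this
        have h2 : (2:ℤ_[2]) ∣ u := Dvd.dvd.mul_right (dvd_pow_self 2 (by omega : r ≠ 0)) c
        exact h2.trans h1
      have : (2:ℤ_[2]) ∣ (k:ℤ_[2]) := by
        have := dvd_sub h hdiff
        simpa using this
      exact not_dvd_nat_odd k (by rw [Nat.odd_iff] at hodd; omega) this
    refine ⟨c * S, ?_, ?_⟩
    · intro h
      rcases two_prime.dvd_mul.1 h with h | h
      exacts [hc h, hSunit h]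
    · rw [hv, add_zero, hgeom, hu]; ring

/-- For `m ≡ 3 (mod 4)`, `t = ν_2(m+1) ≥ 2`, and any `l ≥ 0`, `ε = ±1`, `a ∈ {1,3}`, and
`x ∈ ε + 2^(l+2)·a + 2^(l+4)ℤ_2`, one has `ν_2(x^(m²) - x) = t + l + 3`. -/
theorem monomial_Z2_three_mod_four_valuation (m : ℕ) (hm : 2 ≤ m) (hmod : m % 4 = 3) :
    2 ≤ padicValNat 2 (m + 1) ∧
    ∀ l : ℕ, ∀ ε : ℤ_[2], (ε = 1 ∨ ε = -1) → ∀ a : ℕ, (a = 1 ∨ a = 3) →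
      ∀ x : ℤ_[2], (2 : ℤ_[2]) ^ (l + 4) ∣ (x - (ε + 2 ^ (l + 2) * (a : ℤ_[2]))) →
        (x ^ m ^ 2 - x).valuation = (padicValNat 2 (m + 1) : ℤ) + l + 3 := by
  set t := padicValNat 2 (m + 1) with ht
  have hdvd4 : 2^2 ∣ m + 1 := by omega
  have ht2 : 2 ≤ t := by
    rcases (padicValNat_dvd_iff (p := 2) 2 (m+1)).1 hdvd4 with h | h
    · omega
    · exact h
  have hm1 : padicValNat 2 (m - 1) = 1 := by
    obtain ⟨q, rfl⟩ : ∃ q, m = 4*q + 3 := ⟨m / 4, by omega⟩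
    have h1 : 4*q + 3 - 1 = 2 * (2*q + 1) := by omega
    rw [h1, padicValNat.mul (by norm_num) (by omega)]
    rw [padicValNat.self (by norm_num), padicValNat.eq_zero_of_not_dvd (by omega)]
  have hk0 : m^2 - 1 ≠ 0 := by
    have : 2*2 ≤ m^2 := Nat.mul_le_mul hm hm |>.trans_eq (sq m).symm
    omega
  have hsq1 : 1 ≤ m ^ 2 := Nat.one_le_pow _ _ (by omega)
  have hval : padicValNat 2 (m^2 - 1) = t + 1 := by
    have h1 : m^2 - 1 = (m+1) * (m-1) := by
      have := Nat.sq_sub_sq m 1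
      simpa using this
    rw [h1, padicValNat.mul (by omega) (by omega), hm1, ht]
  refine ⟨ht2, ?_⟩
  intro l ε hε a ha x hx
  obtain ⟨z, hz⟩ := hx
  have hx1 : x = ε + 2^(l+2) * ((a:ℤ_[2]) + 4*z) := by linear_combination hz
  have hεε : ε * ε = 1 := by rcases hε with rfl | rfl <;> ring
  have hεu : ¬ (2:ℤ_[2]) ∣ ε := by
    intro h
    rcases hε with rfl | rfl
    · exact not_dvd_nat_odd 1 rfl (by simpa using h)
    · exact not_dvd_nat_odd 1 rfl (by simpa using h.neg_right)
  have hc0 : ¬ (2:ℤ_[2]) ∣ ((a:ℤ_[2]) + 4*z) := by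
    intro h
    have h4 : (2:ℤ_[2]) ∣ 4*z := ⟨2*z, by ring⟩
    have : (2:ℤ_[2]) ∣ (a:ℤ_[2]) := by
      have := dvd_sub h h4
      simpa using this
    exact not_dvd_nat_odd a (by rcases ha with rfl | rfl <;> rfl) this
  set c : ℤ_[2] := ε * ((a:ℤ_[2]) + 4*z) with hc
  have hcu : ¬ (2:ℤ_[2]) ∣ c := by
    intro h
    rcases two_prime.dvd_mul.1 h with h | h
    exacts [hεu h, hc0 h]
  have hxc : x = ε * (1 + 2^(l+2) * c) := by
    rw [hc]; linear_combination hx1 - (2^(l+2) * ((a:ℤ_[2]) + 4*z)) * hεε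
  -- ε^(m^2-1) = 1
  have hn : ∃ n, m^2 - 1 = 2*n := by
    have hmo : Odd m := Nat.odd_iff.2 (by omega)
    have := (hmo.pow (n := 2))
    rw [Nat.odd_iff] at this
    exact ⟨(m^2-1)/2, by omega⟩
  obtain ⟨n, hn⟩ := hn
  have hεk : ε^(m^2-1) = 1 := by
    rw [hn, pow_mul, sq, hεε, one_pow]
  have hpow : x^(m^2) - x = x * ((1 + 2^(l+2)*c)^(m^2-1) - 1) := by
    have h2 : x^(m^2) = x^(m^2-1) * x := by
      rw [← pow_succ]
      congr 1
      omega
    have h3 : x^(m^2-1) = (1 + 2^(l+2)*c)^(m^2-1) := by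
      rw [hxc, mul_pow, hεk, one_mul]
    rw [h2, h3]; ring
  obtain ⟨c', hc', heq⟩ := key (m^2-1) hk0 (l+2) (by omega) c hcu
  rw [hval] at heq
  have hxu : ¬ (2:ℤ_[2]) ∣ x := by
    intro h
    apply hεu
    have h4 : (2:ℤ_[2]) ∣ 2^(l+2) * ((a:ℤ_[2]) + 4*z) :=
      Dvd.dvd.mul_right (dvd_pow_self 2 (by omega : l+2 ≠ 0)) _
    have := dvd_sub h h4
    rw [hx1] at this
    simpa using this
  have hfinal : x^(m^2) - x = 2^((l+2) + (t+1)) * (x * c') := by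
    rw [hpow, heq]; ring
  have hxcu : ¬ (2:ℤ_[2]) ∣ (x * c') := by
    intro h
    rcases two_prime.dvd_mul.1 h with h | h
    exacts [hxu h, hc' h]
  rw [hfinal, val_pow_mul _ _ hxcu]
  push_cast
  ring
end

section
/- Let m ≥ 2 be an integer with m ≡ 3 (mod 4), let f(x) = x^m on ℤ_2, and let t = ν_2(m + 1). For each integer l ≥ 0, each a ∈ {0, 1, …, 2^(t−1) − 1}, and each sign ε ∈ {1, −1}, let x₀ = ε + 2^(l+2) + 2^(l+4)·a (a 2-adic unit, with inverse x₀⁻¹ in ℤ_2) and set M_{l,a,ε} = (x₀ + 2^(t+l+3)ℤ_2) ∪ (x₀⁻¹ + 2^(t+l+2) + 2^(t+l+3)ℤ_2). Then the sets M_{l,a,ε} are pairwise disjoint clopen subsets of ℤ_2, each M_{l,a,ε} is a minimal component of f (f(M_{l,a,ε}) ⊆ M_{l,a,ε} and every forward orbit of f in M_{l,a,ε} is dense in M_{l,a,ε}), and the union of all the M_{l,a,ε} together with the fixed-point set {1, −1} equals the set of 2-adic units ℤ_2 \ 2ℤ_2. -/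
open Filter Topology

namespace MZ2

local notation "R" => PadicInt 2

lemma two_ne_zero' : (2 : ℤ_[2]) ≠ 0 := by
  have : ((2:ℕ) : ℤ_[2]) ≠ 0 := Nat.cast_ne_zero.mpr (by norm_num)
  simpa using this

lemma prime_two : Prime (2 : ℤ_[2]) := by
  have := PadicInt.prime_p (p := 2)
  simpa using this

lemma dvd_iff_toZMod_eq_zero (x : ℤ_[2]) : (2 : ℤ_[2]) ∣ x ↔ PadicInt.toZMod x = 0 := by
  have h := PadicInt.ker_toZMod (p := 2)
  constructor
  · intro hx
    have : x ∈ RingHom.ker (PadicInt.toZMod (p := 2)) := by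
      rw [h, PadicInt.maximalIdeal_eq_span_p, Ideal.mem_span_singleton]
      simpa using hx
    simpa [RingHom.mem_ker] using this
  · intro hx
    have : x ∈ RingHom.ker (PadicInt.toZMod (p := 2)) := by simpa [RingHom.mem_ker] using hx
    rw [h, PadicInt.maximalIdeal_eq_span_p, Ideal.mem_span_singleton] at this
    simpa using this

lemma odd_one : ¬ (2 : ℤ_[2]) ∣ 1 := by
  rw [dvd_iff_toZMod_eq_zero]
  simp

lemma odd_sub (a b : ℤ_[2]) (ha : ¬ (2:ℤ_[2]) ∣ a) (hb : ¬ (2:ℤ_[2]) ∣ b) :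
    (2:ℤ_[2]) ∣ a - b := by
  rw [dvd_iff_toZMod_eq_zero] at *
  have h2 : ∀ c : ZMod 2, c ≠ 0 → c = 1 := by decide
  rw [map_sub, h2 _ ha, h2 _ hb, sub_self]

lemma odd_add (a b : ℤ_[2]) (ha : ¬ (2:ℤ_[2]) ∣ a) (hb : ¬ (2:ℤ_[2]) ∣ b) :
    (2:ℤ_[2]) ∣ a + b := by
  have := odd_sub a (-b) ha (by rwa [dvd_neg])
  simpa using this

lemma odd_mul (a b : ℤ_[2]) (ha : ¬ (2:ℤ_[2]) ∣ a) (hb : ¬ (2:ℤ_[2]) ∣ b) :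
    ¬ (2:ℤ_[2]) ∣ a * b := by
  intro h
  rcases prime_two.2.2 _ _ h with h | h
  exacts [ha h, hb h]

lemma isUnit_of_odd {x : ℤ_[2]} (hx : ¬ (2:ℤ_[2]) ∣ x) : IsUnit x := by
  rw [PadicInt.isUnit_iff]
  refine le_antisymm (PadicInt.norm_le_one x) ?_
  by_contra h
  push_neg at h
  have : ‖x‖ < 1 := h
  rw [PadicInt.norm_lt_one_iff_dvd] at this
  exact hx (by simpa using this)

lemma odd_eps {ε : ℤ_[2]} (hε : ε = 1 ∨ ε = -1) : ¬ (2:ℤ_[2]) ∣ ε := by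
  rcases hε with rfl | rfl
  · exact odd_one
  · intro h; rw [dvd_neg] at h; exact odd_one h

lemma eps_sq {ε : ℤ_[2]} (hε : ε = 1 ∨ ε = -1) : ε * ε = 1 := by
  rcases hε with rfl | rfl <;> ring

lemma int_pow_dvd_iff (j : ℕ) (n : ℤ) : (2:ℤ_[2])^j ∣ (n : ℤ_[2]) ↔ (2:ℤ)^j ∣ n := by
  have := PadicInt.pow_p_dvd_int_iff (p := 2) j n
  rw [show ((2:ℕ):ℤ_[2]) = (2:ℤ_[2]) by push_cast; ring] at this
  rw [this]
  norm_num

/-- Nat divisibility bridge. -/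
lemma nat_pow_dvd_iff (j n : ℕ) : (2:ℤ_[2])^j ∣ (n : ℤ_[2]) ↔ 2^j ∣ n := by
  have h := int_pow_dvd_iff j (n : ℤ)
  rw [show (((n:ℤ)):ℤ_[2]) = (n:ℤ_[2]) by push_cast; ring] at h
  rw [h]
  exact_mod_cast Int.natCast_dvd_natCast (m := (2:ℕ)^j) (n := n)

lemma odd_natCast {n : ℕ} (hn : n % 2 = 1) : ¬ (2:ℤ_[2]) ∣ (n : ℤ_[2]) := by
  have := (nat_pow_dvd_iff 1 n)
  simp only [pow_one] at this
  rw [this]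
  omega

lemma pow_cancel {k : ℕ} {c : ℤ_[2]} (h : (2:ℤ_[2])^(k+1) ∣ 2^k * c) : (2:ℤ_[2]) ∣ c := by
  rw [pow_succ] at h
  exact (mul_dvd_mul_iff_left (pow_ne_zero k two_ne_zero')).mp h


lemma term_dvd (n v s k : ℕ) (hs : 2 ≤ s) (hk : 2 ≤ k) (hkn : k ≤ n) (hn : 2^v ∣ n)
    (w : ℤ_[2]) (hw : (2:ℤ_[2])^s ∣ w) :
    (2:ℤ_[2])^(v+s+1) ∣ w^k * (n.choose k : ℤ_[2]) := by
  have hwk : (2:ℤ_[2])^(s*k) ∣ w^k := by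
    have := pow_dvd_pow_of_dvd hw k
    rwa [← pow_mul] at this
  set e := padicValNat 2 k with he
  have hk0 : k ≠ 0 := by omega
  have h2e : 2^e ∣ k := pow_padicValNat_dvd
  have h2ek : 2^e ≤ k := Nat.le_of_dvd (by omega) h2e
  have helt : e < k := lt_of_lt_of_le (Nat.lt_two_pow_self (n := e)) h2ek
  by_cases hev : e ≤ v
  · -- 2^(v-e) divides the binomial coefficient
    have hid : n * (n-1).choose (k-1) = n.choose k * k := by
      have := Nat.add_one_mul_choose_eq (n-1) (k-1)
      have h1 : n - 1 + 1 = n := by omega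
      have h2 : k - 1 + 1 = k := by omega
      simpa [Nat.succ_eq_add_one, h1, h2] using this
    have hdvd1 : 2^v ∣ n.choose k * k := hid ▸ Dvd.dvd.mul_right hn _
    set oc := ordCompl[2] k with hoc
    have hkfac : 2^e * oc = k := by
      have := Nat.ordProj_mul_ordCompl_eq_self k 2
      simpa [hoc, he, Nat.factorization_def k Nat.prime_two] using this
    have hodd : ¬ 2 ∣ oc := Nat.not_dvd_ordCompl Nat.prime_two hk0
    have hcop : Nat.Coprime (2^v) oc :=
      Nat.Coprime.pow_left _ ((Nat.Prime.coprime_iff_not_dvd Nat.prime_two).mpr hodd)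
    have hdvd2 : 2^v ∣ n.choose k * 2^e := by
      refine hcop.dvd_of_dvd_mul_right ?_
      have heq : n.choose k * 2^e * oc = n.choose k * k := by rw [mul_assoc, hkfac]
      rwa [heq]
    have hdvd3 : 2^(v-e) ∣ n.choose k := by
      have h2v : (2:ℕ)^v = 2^e * 2^(v-e) := by rw [← pow_add]; congr 1; omega
      rw [h2v, mul_comm (n.choose k) (2^e)] at hdvd2
      exact (Nat.mul_dvd_mul_iff_left (Nat.pow_pos (by norm_num : 0 < 2) (n := e))).mp hdvd2
    have hdvd4 : (2:ℤ_[2])^(v-e) ∣ (n.choose k : ℤ_[2]) := by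
      obtain ⟨c, hc⟩ := hdvd3
      refine ⟨(c : ℤ_[2]), ?_⟩
      rw [hc]; push_cast; ring
    have hle : v + s + 1 ≤ s*k + (v-e) := by
      have h1 : e + s + 1 ≤ s * k := by nlinarith
      generalize s * k = P at h1 ⊢
      omega
    calc (2:ℤ_[2])^(v+s+1) ∣ (2:ℤ_[2])^(s*k + (v-e)) := pow_dvd_pow 2 hle
      _ = (2:ℤ_[2])^(s*k) * (2:ℤ_[2])^(v-e) := by rw [pow_add]
      _ ∣ w^k * (n.choose k : ℤ_[2]) := mul_dvd_mul hwk hdvd4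
  · -- k is huge
    have hke : 2^(v+1) ≤ k := le_trans (Nat.pow_le_pow_right (by norm_num) (by omega)) h2ek
    have hkv : v + 2 ≤ k := le_trans (by have := Nat.lt_two_pow_self (n := v+1); omega) hke
    have hle : v + s + 1 ≤ s * k := by nlinarith
    exact dvd_trans (pow_dvd_pow 2 hle) (dvd_trans hwk (dvd_mul_right _ _))

lemma key_pow (w : ℤ_[2]) (s : ℕ) (hs : 2 ≤ s) (hw : (2:ℤ_[2])^s ∣ w) (n v : ℕ)
    (hn : 2^v ∣ n) :
    (2:ℤ_[2])^(v+s+1) ∣ (1+w)^n - 1 - (n:ℤ_[2])*w := by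
  rcases Nat.eq_zero_or_pos n with rfl | hn1
  · simp
  have expand : (1+w)^n = ∑ k ∈ Finset.range (n+1), w^k * (n.choose k : ℤ_[2]) := by
    rw [add_comm, add_pow]
    simp
  have hsplit : ∑ k ∈ Finset.range (n+1), w^k * (n.choose k : ℤ_[2]) =
      1 + (n:ℤ_[2])*w + ∑ k ∈ Finset.Ico 2 (n+1), w^k * (n.choose k : ℤ_[2]) := by
    rw [Finset.range_eq_Ico,
      Finset.sum_eq_sum_Ico_succ_bot (by omega : 0 < n+1),
      Finset.sum_eq_sum_Ico_succ_bot (by omega : 1 < n+1)]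
    simp [mul_comm]
    ring
  have : (1+w)^n - 1 - (n:ℤ_[2])*w = ∑ k ∈ Finset.Ico 2 (n+1), w^k * (n.choose k : ℤ_[2]) := by
    rw [expand, hsplit]; ring
  rw [this]
  refine Finset.dvd_sum ?_
  intro k hk
  rw [Finset.mem_Ico] at hk
  exact term_dvd n v s k hs hk.1 (by omega) hn w hw


lemma odd_add_even {a b : ℤ_[2]} (ha : ¬(2:ℤ_[2])∣a) (hb : (2:ℤ_[2])∣b) : ¬(2:ℤ_[2])∣(a+b) := by
  intro h
  exact ha (by have := dvd_sub h hb; simpa using this)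

lemma odd_neg {a : ℤ_[2]} (ha : ¬(2:ℤ_[2])∣a) : ¬(2:ℤ_[2])∣(-a) := fun h => ha ((dvd_neg).mp h)

lemma odd_inv {X : ℤ_[2]} (hX : IsUnit X) : ¬(2:ℤ_[2])∣ Ring.inverse X := by
  intro h
  have h1 : Ring.inverse X * X = 1 := Ring.inverse_mul_cancel X hX
  exact odd_one (h1 ▸ h.mul_right X)

lemma dvd_of_unit_mul {c a b : ℤ_[2]} (hc : IsUnit c) (h : a ∣ c * b) : a ∣ b := by
  have h1 : Ring.inverse c * (c * b) = b := by
    rw [← mul_assoc, Ring.inverse_mul_cancel c hc, one_mul]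
  exact h1 ▸ h.mul_left (Ring.inverse c)

lemma inv_cong {x y : ℤ_[2]} (hx : IsUnit x) (hy : IsUnit y) {k : ℕ}
    (h : (2:ℤ_[2])^k ∣ x - y) : (2:ℤ_[2])^k ∣ Ring.inverse x - Ring.inverse y := by
  have hxx : x * Ring.inverse x = 1 := Ring.mul_inverse_cancel x hx
  have hyy : y * Ring.inverse y = 1 := Ring.mul_inverse_cancel y hy
  have key : Ring.inverse x - Ring.inverse y
      = Ring.inverse x * Ring.inverse y * (y - x) := by
    linear_combination (Ring.inverse y) * hxx - (Ring.inverse x) * hyy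
  rw [key]
  exact Dvd.dvd.mul_left (by simpa using h.neg_right) _

section Params

variable {t l a : ℕ} {ε X x : ℤ_[2]}

lemma odd_center (hε : ε = 1 ∨ ε = -1)
    (hX : X = ε + 2^(l+2) + 2^(l+4)*(a:ℤ_[2])) : ¬(2:ℤ_[2])∣X := by
  subst hX
  refine odd_add_even (odd_add_even (odd_eps hε) ?_) ?_
  · exact dvd_pow_self (2:ℤ_[2]) (by omega)
  · exact dvd_mul_of_dvd_left (dvd_pow_self (2:ℤ_[2]) (by omega)) _

lemma unit_center (hε : ε = 1 ∨ ε = -1)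
    (hX : X = ε + 2^(l+2) + 2^(l+4)*(a:ℤ_[2])) : IsUnit X :=
  isUnit_of_odd (odd_center hε hX)

lemma odd_c2 (hε : ε = 1 ∨ ε = -1) (hX : X = ε + 2^(l+2) + 2^(l+4)*(a:ℤ_[2])) :
    ¬(2:ℤ_[2])∣(Ring.inverse X + 2^(t+l+2)) :=
  odd_add_even (odd_inv (unit_center hε hX)) (dvd_pow_self 2 (by omega))

lemma mem_decomp (hε : ε = 1 ∨ ε = -1) (ht2 : 2 ≤ t)
    (hX : X = ε + 2^(l+2) + 2^(l+4)*(a:ℤ_[2]))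
    (hx : (2:ℤ_[2])^(t+l+3) ∣ x - X ∨
      (2:ℤ_[2])^(t+l+3) ∣ x - (Ring.inverse X + 2^(t+l+2))) :
    ∃ u, x - ε = 2^(l+2)*u ∧ ¬(2:ℤ_[2])∣u := by
  have heps : ε * ε = 1 := eps_sq hε
  rcases hx with ⟨s, hs⟩ | ⟨s, hs⟩
  · refine ⟨(1 + 4*(a:ℤ_[2])) + 2^(t+1)*s, ?_, ?_⟩
    · have h1 : (2:ℤ_[2])^(t+l+3) = 2^(l+2) * 2^(t+1) := by rw [← pow_add]; ring_nf
      rw [h1] at hs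
      rw [hX] at hs
      linear_combination hs
    · refine odd_add_even (odd_add_even odd_one ?_) ?_
      · exact ⟨2*a, by ring⟩
      · exact Dvd.dvd.mul_right (dvd_pow_self 2 (by omega)) _
  · have hunit := unit_center hε hX
    have hinv : Ring.inverse X * X = 1 := Ring.inverse_mul_cancel X hunit
    refine ⟨-ε * Ring.inverse X * (1 + 4*(a:ℤ_[2])) + (2^t + 2^(t+1)*s), ?_, ?_⟩
    · have h1 : (2:ℤ_[2])^(t+l+3) = 2^(l+2) * 2^(t+1) := by rw [← pow_add]; ring_nf
      have h2 : (2:ℤ_[2])^(t+l+2) = 2^(l+2) * 2^t := by rw [← pow_add]; ring_nf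
      rw [h1, h2] at hs
      linear_combination hs + ε * hinv - ε * (Ring.inverse X) * hX
        - (Ring.inverse X) * heps
    · refine odd_add_even ?_ ?_
      · have h3 : ¬(2:ℤ_[2]) ∣ ε * Ring.inverse X * (1 + 4*(a:ℤ_[2])) :=
          odd_mul _ _ (odd_mul _ _ (odd_eps hε) (odd_inv hunit))
            (odd_add_even odd_one ⟨2*(a:ℤ_[2]), by ring⟩)
        intro h
        apply h3
        rw [show -ε * Ring.inverse X * (1+4*(a:ℤ_[2]))
          = -(ε * Ring.inverse X * (1+4*(a:ℤ_[2]))) by ring] at h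
        exact dvd_neg.mp h
      · exact dvd_add (dvd_pow_self (2:ℤ_[2]) (by omega))
          (dvd_mul_of_dvd_left (dvd_pow_self (2:ℤ_[2]) (by omega)) _)

end Params


section NatFacts

variable {m t : ℕ}

lemma q_fact (hdvd : 2^t ∣ m+1) (hndvd : ¬2^(t+1) ∣ m+1) :
    ∃ q, m + 1 = 2^t*q ∧ q % 2 = 1 := by
  obtain ⟨q, hq⟩ := hdvd
  refine ⟨q, hq, ?_⟩
  by_contra h
  have h2 : 2 ∣ q := by omega
  obtain ⟨q', rfl⟩ := h2
  exact hndvd ⟨q', by rw [hq]; ring⟩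

lemma msq_fact (hm : 2 ≤ m) (hmod : m % 4 = 3) (hdvd : 2^t ∣ m+1)
    (hndvd : ¬2^(t+1) ∣ m+1) :
    ∃ c, m^2 = 1 + 2^(t+1)*c ∧ c % 2 = 1 := by
  obtain ⟨q, hq, hqodd⟩ := q_fact hdvd hndvd
  obtain ⟨M, rfl⟩ : ∃ M, m = M + 3 := ⟨m - 3, by omega⟩
  obtain ⟨c1, hc1, hc1o⟩ : ∃ c1, M + 2 = 2*c1 ∧ c1 % 2 = 1 := ⟨(M+2)/2, by omega, by omega⟩
  refine ⟨c1*q, ?_, ?_⟩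
  · have hq4 : M + 4 = 2^t * q := by omega
    have h1 : (M+3)^2 = (M+2)*(M+4) + 1 := by ring
    rw [h1, hc1, hq4]
    ring
  · have := Nat.mul_mod c1 q 2
    rw [hc1o, hqodd] at this
    omega

lemma mexp_fact (hm : 2 ≤ m) (hmod : m % 4 = 3) (hdvd : 2^t ∣ m+1)
    (hndvd : ¬2^(t+1) ∣ m+1) (ht : 1 ≤ t) (j : ℕ) :
    ∃ c, (m^2)^(2^j) = 1 + 2^(t+1+j)*c ∧ c % 2 = 1 := by
  induction j with
  | zero =>
    obtain ⟨c, hc, ho⟩ := msq_fact hm hmod hdvd hndvd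
    exact ⟨c, by simpa using hc, ho⟩
  | succ j ih =>
    obtain ⟨c, hc, ho⟩ := ih
    refine ⟨c + 2^(t+j)*c^2, ?_, ?_⟩
    · have h1 : (m^2)^(2^(j+1)) = ((m^2)^(2^j))^2 := by
        calc (m^2)^(2^(j+1)) = (m^2)^(2^j*2) := by rw [pow_succ 2 j]
          _ = ((m^2)^(2^j))^2 := pow_mul _ _ _
      rw [h1, hc]
      ring
    · have h2 : 2 ∣ 2^(t+j)*c^2 := by
        exact dvd_mul_of_dvd_left (dvd_pow_self 2 (by omega)) _
      omega

lemma mpow_sub_one (hm : 2 ≤ m) (hmod : m % 4 = 3) (hdvd : 2^t ∣ m+1)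
    (hndvd : ¬2^(t+1) ∣ m+1) (k : ℕ) :
    ∃ c, (m^2)^k = 1 + 2^(t+1)*c := by
  obtain ⟨c0, hc0, _⟩ := msq_fact hm hmod hdvd hndvd
  have h1 : (m^2 - 1) ∣ ((m^2)^k - 1^k) := Nat.sub_dvd_pow_sub_pow (m^2) 1 k
  have h2 : m^2 - 1 = 2^(t+1)*c0 := by omega
  rw [h2, one_pow] at h1
  obtain ⟨c, hc⟩ := h1
  have hpos : 1 ≤ (m^2)^k := Nat.one_le_pow _ _ (by positivity)
  exact ⟨c0*c, by rw [← mul_assoc, ← hc]; omega⟩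

lemma m_odd (hmod : m % 4 = 3) : m % 2 = 1 := by omega

lemma mpow_odd (hmod : m % 4 = 3) (k : ℕ) : (m^2)^k % 2 = 1 := by
  have h := Nat.pow_mod (m^2) k 2
  have h2 := Nat.pow_mod m 2 2
  rw [m_odd hmod] at h2
  simp at h2
  rw [h2] at h
  simp at h
  omega

end NatFacts

section PowShift

lemma pow_shift (x ε u : ℤ_[2]) (hε : ε = 1 ∨ ε = -1) (l v : ℕ)
    (hu : x - ε = 2^(l+2)*u) (hou : ¬(2:ℤ_[2])∣u) (E c : ℕ) (hv : 1 ≤ v)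
    (hE : E = 1 + 2^v * c) :
    ∃ d : ℤ_[2], x^E = x + 2^(v+l+2)*d ∧ ((c % 2 = 1) → ¬(2:ℤ_[2])∣d) := by
  have heps : ε * ε = 1 := eps_sq hε
  set w : ℤ_[2] := ε*x - 1 with hwdef
  have hw : w = 2^(l+2)*(ε*u) := by
    rw [hwdef]
    linear_combination ε*hu + heps
  have hx_eq : x = ε*(1+w) := by
    rw [hwdef]
    linear_combination (-x) * heps
  have hx2 : x = ε + 2^(l+2)*u := by linear_combination hu
  have hodd_x : ¬(2:ℤ_[2])∣x := by
    rw [hx2]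
    exact odd_add_even (odd_eps hε) (dvd_mul_of_dvd_left (dvd_pow_self (2:ℤ_[2]) (by omega)) _)
  have hE1 : E - 1 = 2^v*c := by omega
  have hv' : v - 1 + 1 = v := by omega
  have hEodd : E = 2*(2^(v-1)*c)+1 := by
    have h2v : (2:ℕ)^v = 2*2^(v-1) := by
      calc (2:ℕ)^v = 2^((v-1)+1) := by rw [hv']
        _ = 2*2^(v-1) := by rw [pow_succ]; ring
    rw [hE, h2v]; ring
  have heps_pow : ε^E = ε := by
    rw [hEodd, pow_succ, pow_mul, sq, heps, one_pow, one_mul]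
  have hE' : E = (E - 1) + 1 := by omega
  have hpow : x^E = x * (1+w)^(E-1) := by
    calc x^E = (ε*(1+w))^E := by rw [← hx_eq]
      _ = ε^E * (1+w)^E := mul_pow _ _ _
      _ = ε * ((1+w)^((E-1)+1)) := by rw [heps_pow, ← hE']
      _ = (ε*(1+w)) * (1+w)^(E-1) := by rw [pow_succ]; ring
      _ = x * (1+w)^(E-1) := by rw [← hx_eq]
  have hwd : (2:ℤ_[2])^(l+2) ∣ w := ⟨ε*u, hw⟩
  obtain ⟨RR, hR⟩ := key_pow w (l+2) (by omega) hwd (E-1) v ⟨c, hE1⟩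
  have hcast : ((E-1 : ℕ) : ℤ_[2]) = 2^v * (c:ℤ_[2]) := by rw [hE1]; push_cast; ring
  refine ⟨x*((c:ℤ_[2])*ε*u + 2*RR), ?_, ?_⟩
  · have hVL : v + (l+2) + 1 = v + l + 3 := by omega
    rw [hVL] at hR
    linear_combination hpow + x*hR + (x*w)*hcast + (x*2^v*(c:ℤ_[2]))*hw
  · intro hc
    refine odd_mul _ _ hodd_x (odd_add_even ?_ ⟨RR, by ring⟩)
    exact odd_mul _ _ (odd_mul _ _ (odd_natCast hc) (odd_eps hε)) hou

end PowShift


section Invariance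

variable {m t l a : ℕ} {ε X x : ℤ_[2]}

lemma pow_m_cong (hm : 2 ≤ m) (hmod : m % 4 = 3) (hdvd : 2^t ∣ m+1)
    (hndvd : ¬2^(t+1) ∣ m+1) (hε : ε = 1 ∨ ε = -1) {u : ℤ_[2]}
    (hu : x - ε = 2^(l+2)*u) (hou : ¬(2:ℤ_[2])∣u) :
    (2:ℤ_[2])^(t+l+3) ∣ x^m - (Ring.inverse x + 2^(t+l+2)) := by
  have heps : ε * ε = 1 := eps_sq hε
  set w : ℤ_[2] := ε*x - 1 with hwdef
  have hw : w = 2^(l+2)*(ε*u) := by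
    rw [hwdef]; linear_combination ε*hu + heps
  have hx_eq : x = ε*(1+w) := by
    rw [hwdef]; linear_combination (-x) * heps
  have hx2 : x = ε + 2^(l+2)*u := by linear_combination hu
  have hodd_x : ¬(2:ℤ_[2])∣x := by
    rw [hx2]
    exact odd_add_even (odd_eps hε) (dvd_mul_of_dvd_left (dvd_pow_self (2:ℤ_[2]) (by omega)) _)
  obtain ⟨q, hq, hqodd⟩ := q_fact hdvd hndvd
  have hm1even : ε^(m+1) = 1 := by
    have h2 : m + 1 = 2*((m+1)/2) := by omega
    rw [h2, pow_mul, sq, heps, one_pow]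
  have hxm1 : x^(m+1) = (1+w)^(m+1) := by
    rw [hx_eq, mul_pow, hm1even, one_mul]
  have hwd : (2:ℤ_[2])^(l+2) ∣ w := ⟨ε*u, hw⟩
  obtain ⟨s1, hs1⟩ := key_pow w (l+2) (by omega) hwd (m+1) t hdvd
  have hcast : ((m+1 : ℕ) : ℤ_[2]) = 2^t * (q:ℤ_[2]) := by rw [hq]; push_cast; ring
  have hA : ((m+1:ℕ):ℤ_[2])*w - 2^(t+l+2) = 2^(t+l+2)*((q:ℤ_[2])*ε*u - 1) := by
    rw [hcast, hw]; ring
  obtain ⟨s2, hs2⟩ : (2:ℤ_[2]) ∣ (q:ℤ_[2])*ε*u - 1 :=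
    odd_sub _ _ (odd_mul _ _ (odd_mul _ _ (odd_natCast hqodd) (odd_eps hε)) hou) odd_one
  have hB : x^(m+1) - 1 - 2^(t+l+2) = 2^(t+l+3)*(s1 + s2) := by
    have ht3 : t + (l+2) + 1 = t + l + 3 := by omega
    rw [ht3] at hs1
    rw [hxm1]
    calc (1+w)^(m+1) - 1 - 2^(t+l+2)
        = ((1+w)^(m+1) - 1 - ((m+1:ℕ):ℤ_[2])*w) + (((m+1:ℕ):ℤ_[2])*w - 2^(t+l+2)) := by ring
      _ = 2^(t+l+3)*s1 + 2^(t+l+2)*(2*s2) := by rw [hs1, hA, hs2]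
      _ = 2^(t+l+3)*(s1+s2) := by ring
  have hunx : IsUnit x := isUnit_of_odd hodd_x
  have hinv : x * Ring.inverse x = 1 := Ring.mul_inverse_cancel x hunx
  obtain ⟨s3, hs3⟩ : (2:ℤ_[2]) ∣ x - 1 := odd_sub _ _ hodd_x odd_one
  have hpows : x^(m+1) = x^m * x := pow_succ x m
  have identity : x^m - (Ring.inverse x + 2^(t+l+2)) =
      Ring.inverse x * ((x^(m+1) - 1 - 2^(t+l+2)) - 2^(t+l+2)*(x-1)) := by
    linear_combination (2^(t+l+2) - x^m) * hinv - Ring.inverse x * hpows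
  rw [identity]
  refine Dvd.dvd.mul_left ?_ _
  have hC : (2:ℤ_[2])^(t+l+3) ∣ 2^(t+l+2)*(x-1) := by
    rw [hs3, pow_succ]
    exact ⟨s3, by ring⟩
  exact dvd_sub ⟨s1+s2, hB⟩ hC

lemma map_B1 (hm : 2 ≤ m) (hmod : m % 4 = 3) (hdvd : 2^t ∣ m+1)
    (hndvd : ¬2^(t+1) ∣ m+1) (ht2 : 2 ≤ t) (hε : ε = 1 ∨ ε = -1)
    (hX : X = ε + 2^(l+2) + 2^(l+4)*(a:ℤ_[2]))
    (hx : (2:ℤ_[2])^(t+l+3) ∣ x - X) :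
    (2:ℤ_[2])^(t+l+3) ∣ x^m - (Ring.inverse X + 2^(t+l+2)) := by
  obtain ⟨u, hu, hou⟩ := mem_decomp hε ht2 hX (Or.inl hx)
  have hA := pow_m_cong hm hmod hdvd hndvd hε hu hou
  have hodd_x : ¬(2:ℤ_[2])∣x := by
    rw [show x = ε + 2^(l+2)*u by linear_combination hu]
    exact odd_add_even (odd_eps hε) (dvd_mul_of_dvd_left (dvd_pow_self (2:ℤ_[2]) (by omega)) _)
  have hB := inv_cong (isUnit_of_odd hodd_x) (unit_center hε hX) hx
  have h := dvd_add hA hB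
  rwa [show (x^m - (Ring.inverse x + 2^(t+l+2))) + (Ring.inverse x - Ring.inverse X)
    = x^m - (Ring.inverse X + 2^(t+l+2)) by ring] at h

lemma map_B2 (hm : 2 ≤ m) (hmod : m % 4 = 3) (hdvd : 2^t ∣ m+1)
    (hndvd : ¬2^(t+1) ∣ m+1) (ht2 : 2 ≤ t) (hε : ε = 1 ∨ ε = -1)
    (hX : X = ε + 2^(l+2) + 2^(l+4)*(a:ℤ_[2]))
    (hx : (2:ℤ_[2])^(t+l+3) ∣ x - (Ring.inverse X + 2^(t+l+2))) :
    (2:ℤ_[2])^(t+l+3) ∣ x^m - X := by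
  obtain ⟨u, hu, hou⟩ := mem_decomp hε ht2 hX (Or.inr hx)
  have hA := pow_m_cong hm hmod hdvd hndvd hε hu hou
  have hodd_x : ¬(2:ℤ_[2])∣x := by
    rw [show x = ε + 2^(l+2)*u by linear_combination hu]
    exact odd_add_even (odd_eps hε) (dvd_mul_of_dvd_left (dvd_pow_self (2:ℤ_[2]) (by omega)) _)
  have hunX := unit_center hε hX
  have hinvX : Ring.inverse X * X = 1 := Ring.inverse_mul_cancel X hunX
  have hunc2 : IsUnit (Ring.inverse X + 2^(t+l+2)) := isUnit_of_odd (odd_c2 hε hX)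
  have hinvc2 : Ring.inverse (Ring.inverse X + 2^(t+l+2)) * (Ring.inverse X + 2^(t+l+2)) = 1 :=
    Ring.inverse_mul_cancel _ hunc2
  have hB := inv_cong (isUnit_of_odd hodd_x) hunc2 hx
  -- C : c₂ * (X + 2^G) - 1 is divisible
  obtain ⟨s4, hs4⟩ : (2:ℤ_[2]) ∣ X + Ring.inverse X :=
    odd_add _ _ (odd_center hε hX) (odd_inv hunX)
  have hCid : (Ring.inverse X + 2^(t+l+2)) * (X + 2^(t+l+2)) - 1
      = 2^(t+l+2)*(X + Ring.inverse X) + 2^(t+l+2)*2^(t+l+2) + (Ring.inverse X * X - 1) := by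
    ring
  have hC : (2:ℤ_[2])^(t+l+3) ∣ (Ring.inverse X + 2^(t+l+2)) * (X + 2^(t+l+2)) - 1 := by
    rw [hCid, hinvX, sub_self, add_zero]
    refine dvd_add ?_ ?_
    · rw [hs4, pow_succ]
      exact ⟨s4, by ring⟩
    · rw [← pow_add]
      exact pow_dvd_pow 2 (by omega)
  have hD : (2:ℤ_[2])^(t+l+3) ∣
      Ring.inverse (Ring.inverse X + 2^(t+l+2)) - (X + 2^(t+l+2)) := by
    have hDid : Ring.inverse (Ring.inverse X + 2^(t+l+2)) - (X + 2^(t+l+2))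
        = -Ring.inverse (Ring.inverse X + 2^(t+l+2)) *
          ((Ring.inverse X + 2^(t+l+2)) * (X + 2^(t+l+2)) - 1) := by
      linear_combination (X + 2^(t+l+2))*hinvc2
    rw [hDid]
    exact Dvd.dvd.mul_left hC _
  have h := dvd_add (dvd_add (dvd_add hA hB) hD) (dvd_refl ((2:ℤ_[2])^(t+l+3)))
  rwa [show (x^m - (Ring.inverse x + 2^(t+l+2))
      + (Ring.inverse x - Ring.inverse (Ring.inverse X + 2^(t+l+2)))
      + (Ring.inverse (Ring.inverse X + 2^(t+l+2)) - (X + 2^(t+l+2)))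
      + 2^(t+l+3)) = x^m - X by ring] at h

end Invariance


section Dense

variable {m t : ℕ}

lemma dense_aux (hm : 2 ≤ m) (hmod : m % 4 = 3) (hdvd : 2^t ∣ m+1)
    (hndvd : ¬2^(t+1) ∣ m+1) (ht2 : 2 ≤ t) {ε : ℤ_[2]} (hε : ε = 1 ∨ ε = -1) (l : ℕ) :
    ∀ (N : ℕ) (x u : ℤ_[2]), (x - ε = 2^(l+2)*u) → ¬(2:ℤ_[2])∣u →
    ∀ y, (2:ℤ_[2])^(t+l+3) ∣ y - x →
    ∃ k, (2:ℤ_[2])^(t+l+3+N) ∣ y - x^((m^2)^k) := by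
  intro N
  induction N with
  | zero =>
    intro x u hu hou y hy
    exact ⟨0, by simpa using hy⟩
  | succ N ih =>
    intro x u hu hou y hy
    obtain ⟨k, hk⟩ := ih x u hu hou y hy
    obtain ⟨c0, hc0⟩ := mpow_sub_one hm hmod hdvd hndvd k
    obtain ⟨d0, hd0, _⟩ := pow_shift x ε u hε l (t+1) hu hou ((m^2)^k) c0 (by omega) hc0
    have hexp0 : t+1+l+2 = t+l+3 := by omega
    rw [hexp0] at hd0
    set z := x^((m^2)^k) with hz
    have hz_decomp : z - ε = 2^(l+2)*(u + 2^(t+1)*d0) := by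
      rw [hd0]
      linear_combination hu
    have hz_odd_u : ¬(2:ℤ_[2])∣(u + 2^(t+1)*d0) :=
      odd_add_even hou (dvd_mul_of_dvd_left (dvd_pow_self (2:ℤ_[2]) (by omega)) _)
    by_cases hdone : (2:ℤ_[2])^(t+l+3+(N+1)) ∣ y - z
    · exact ⟨k, hdone⟩
    · obtain ⟨cN, hcN, hcNodd⟩ := mexp_fact hm hmod hdvd hndvd (by omega) N
      obtain ⟨d, hd, hdodd⟩ := pow_shift z ε (u + 2^(t+1)*d0) hε l (t+1+N) hz_decomp
        hz_odd_u ((m^2)^(2^N)) cN (by omega) hcN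
      have hexp : t+1+N+l+2 = t+l+3+N := by omega
      rw [hexp] at hd
      have hdo := hdodd hcNodd
      obtain ⟨cc, hcc⟩ := hk
      have hcc_odd : ¬(2:ℤ_[2])∣cc := by
        intro h2c
        obtain ⟨e, he⟩ := h2c
        refine hdone ⟨e, ?_⟩
        rw [hcc, he]
        ring
      obtain ⟨s5, hs5⟩ : (2:ℤ_[2]) ∣ cc - d := odd_sub _ _ hcc_odd hdo
      refine ⟨k + 2^N, ?_⟩
      have hzz : x^((m^2)^(k+2^N)) = z^((m^2)^(2^N)) := by
        rw [hz, ← pow_mul x ((m^2)^k) ((m^2)^(2^N)), ← pow_add]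
      rw [hzz, hd]
      refine ⟨s5, ?_⟩
      linear_combination hcc + (2:ℤ_[2])^(t+l+3+N)*hs5

lemma isClopen_cong (c : ℤ_[2]) (k : ℕ) :
    IsClopen {x : ℤ_[2] | (2:ℤ_[2])^k ∣ x - c} := by
  have hiff : ∀ x : ℤ_[2], (2:ℤ_[2])^k ∣ x - c ↔ ‖x - c‖ ≤ (2:ℝ)^(-(k:ℤ)) := by
    intro x
    have h1 := PadicInt.norm_le_pow_iff_mem_span_pow (p := 2) (x - c) k
    rw [Ideal.mem_span_singleton] at h1
    have h2 : ((2:ℕ):ℤ_[2]) = (2:ℤ_[2]) := by norm_num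
    have h3 : ((2:ℕ):ℝ) = (2:ℝ) := by norm_num
    rw [h2, h3] at h1
    exact h1.symm
  constructor
  · have h1 : {x : ℤ_[2] | (2:ℤ_[2])^k ∣ x - c} = Metric.closedBall c ((2:ℝ)^(-(k:ℤ))) := by
      ext x
      rw [Metric.mem_closedBall, dist_eq_norm, Set.mem_setOf_eq, hiff]
    rw [h1]
    exact Metric.isClosed_closedBall
  · have h2 : {x : ℤ_[2] | (2:ℤ_[2])^k ∣ x - c} = Metric.ball c ((2:ℝ)^(-(k:ℤ)+1)) := by
      ext x
      rw [Metric.mem_ball, dist_eq_norm, Set.mem_setOf_eq, hiff]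
      have h3 := PadicInt.norm_le_pow_iff_norm_lt_pow_add_one (p := 2) (x - c) (-(k:ℤ))
      norm_num at h3 ⊢
      rw [h3]
    rw [h2]
    exact Metric.isOpen_ball

lemma orbit_dense {l a : ℕ} {ε X : ℤ_[2]} (hm : 2 ≤ m) (hmod : m % 4 = 3)
    (hdvd : 2^t ∣ m+1) (hndvd : ¬2^(t+1) ∣ m+1) (ht2 : 2 ≤ t)
    (hε : ε = 1 ∨ ε = -1) (hX : X = ε + 2^(l+2) + 2^(l+4)*(a:ℤ_[2]))
    (x y : ℤ_[2])
    (hx : (2:ℤ_[2])^(t+l+3) ∣ x - X ∨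
      (2:ℤ_[2])^(t+l+3) ∣ x - (Ring.inverse X + 2^(t+l+2)))
    (hy : (2:ℤ_[2])^(t+l+3) ∣ y - X ∨
      (2:ℤ_[2])^(t+l+3) ∣ y - (Ring.inverse X + 2^(t+l+2))) :
    y ∈ closure (Set.range fun n : ℕ => x ^ m ^ n) := by
  -- choose P = x^(m^e₀) in the same ball as y
  obtain ⟨e₀, P, hP, hyP, hPmem⟩ :
      ∃ e₀ P, P = x^(m^e₀) ∧ (2:ℤ_[2])^(t+l+3) ∣ y - P ∧
        ((2:ℤ_[2])^(t+l+3) ∣ P - X ∨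
         (2:ℤ_[2])^(t+l+3) ∣ P - (Ring.inverse X + 2^(t+l+2))) := by
    rcases hx with hx1 | hx2
    · rcases hy with hy1 | hy2
      · refine ⟨0, x, by simp, ?_, Or.inl hx1⟩
        have h := dvd_sub hy1 hx1
        rwa [show (y - X) - (x - X) = y - x by ring] at h
      · refine ⟨1, x^m, by rw [pow_one], ?_, Or.inr ?_⟩
        · have hm2 := map_B1 hm hmod hdvd hndvd ht2 hε hX hx1
          have h := dvd_sub hy2 hm2
          rwa [show (y - (Ring.inverse X + 2^(t+l+2))) - (x^m - (Ring.inverse X + 2^(t+l+2)))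
            = y - x^m by ring] at h
        · exact map_B1 hm hmod hdvd hndvd ht2 hε hX hx1
    · rcases hy with hy1 | hy2
      · refine ⟨1, x^m, by rw [pow_one], ?_, Or.inl ?_⟩
        · have hm2 := map_B2 hm hmod hdvd hndvd ht2 hε hX hx2
          have h := dvd_sub hy1 hm2
          rwa [show (y - X) - (x^m - X) = y - x^m by ring] at h
        · exact map_B2 hm hmod hdvd hndvd ht2 hε hX hx2
      · refine ⟨0, x, by simp, ?_, Or.inr hx2⟩
        have h := dvd_sub hy2 hx2
        rwa [show (y - (Ring.inverse X + 2^(t+l+2)))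
          - (x - (Ring.inverse X + 2^(t+l+2))) = y - x by ring] at h
  obtain ⟨u, hu, hou⟩ := mem_decomp hε ht2 hX hPmem
  rw [Metric.mem_closure_iff]
  intro δ hδ
  obtain ⟨N, hN⟩ : ∃ N : ℕ, ((1:ℝ)/2)^N < δ := exists_pow_lt_of_lt_one hδ (by norm_num)
  obtain ⟨k, hk⟩ := dense_aux hm hmod hdvd hndvd ht2 hε l N P u hu hou y hyP
  refine ⟨x^(m^(e₀ + 2*k)), ⟨e₀ + 2*k, rfl⟩, ?_⟩
  have hPk : P^((m^2)^k) = x^(m^(e₀+2*k)) := by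
    rw [hP, ← pow_mul x (m^e₀) ((m^2)^k), ← pow_mul m 2 k, ← pow_add]
  rw [hPk] at hk
  have hnorm : ‖y - x^(m^(e₀+2*k))‖ ≤ (2:ℝ)^(-((t+l+3+N : ℕ)):ℤ) := by
    have h1 := PadicInt.norm_le_pow_iff_mem_span_pow (p := 2) (y - x^(m^(e₀+2*k))) (t+l+3+N)
    rw [Ideal.mem_span_singleton] at h1
    have h2 : ((2:ℕ):ℤ_[2]) = (2:ℤ_[2]) := by norm_num
    have h3 : ((2:ℕ):ℝ) = (2:ℝ) := by norm_num
    rw [h2, h3] at h1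
    exact h1.mpr hk
  rw [dist_eq_norm]
  calc ‖y - x^(m^(e₀+2*k))‖ ≤ (2:ℝ)^(-((t+l+3+N : ℕ)):ℤ) := hnorm
    _ ≤ (2:ℝ)^(-(N:ℤ)) := by
        apply zpow_le_zpow_right₀ (by norm_num)
        push_cast
        omega
    _ = ((1:ℝ)/2)^N := by
        rw [zpow_neg, zpow_natCast]
        rw [one_div, inv_pow]
    _ < δ := hN

end Dense


section Disjoint

variable {t l a : ℕ} {ε X x : ℤ_[2]}

lemma J_of_B1 (ht1 : 1 ≤ t) (hX : X = ε + 2^(l+2) + 2^(l+4)*(a:ℤ_[2]))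
    (hx : (2:ℤ_[2])^(t+l+3) ∣ x - X) :
    (2:ℤ_[2])^(l+4) ∣ x - ε - 2^(l+2) := by
  obtain ⟨T, rfl⟩ : ∃ T, t = T+1 := ⟨t-1, by omega⟩
  obtain ⟨s, hs⟩ := hx
  refine ⟨(a:ℤ_[2]) + 2^T*s, ?_⟩
  rw [hX] at hs
  linear_combination hs

lemma notJ_of_B2 (ht2 : 2 ≤ t) (hε : ε = 1 ∨ ε = -1)
    (hX : X = ε + 2^(l+2) + 2^(l+4)*(a:ℤ_[2]))
    (hx : (2:ℤ_[2])^(t+l+3) ∣ x - (Ring.inverse X + 2^(t+l+2))) :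
    ¬ (2:ℤ_[2])^(l+4) ∣ x - ε - 2^(l+2) := by
  intro hJ
  have heps : ε * ε = 1 := eps_sq hε
  have hunX := unit_center hε hX
  have hinv : X * Ring.inverse X = 1 := Ring.mul_inverse_cancel X hunX
  have hx4 : (2:ℤ_[2])^(l+4) ∣ x - (Ring.inverse X + 2^(t+l+2)) :=
    dvd_trans (pow_dvd_pow 2 (by omega)) hx
  have h1 : (2:ℤ_[2])^(l+4) ∣ (Ring.inverse X + 2^(t+l+2)) - ε - 2^(l+2) := by
    have h := dvd_sub hJ hx4
    rwa [show (x - ε - 2^(l+2)) - (x - (Ring.inverse X + 2^(t+l+2)))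
      = (Ring.inverse X + 2^(t+l+2)) - ε - 2^(l+2) by ring] at h
  have h2 : (2:ℤ_[2])^(l+4) ∣ X*((Ring.inverse X + 2^(t+l+2)) - ε - 2^(l+2)) :=
    h1.mul_left X
  have hXc : X*((Ring.inverse X + 2^(t+l+2)) - ε - 2^(l+2))
      = 2^(l+2)*(2^t*X - ε - 2^2*ε*(a:ℤ_[2]) - X) := by
    linear_combination hinv - ε*hX - heps
  rw [hXc] at h2
  have h3 : (2:ℤ_[2])^2 ∣ 2^t*X - ε - 2^2*ε*(a:ℤ_[2]) - X := by
    have hpow : (2:ℤ_[2])^(l+4) = 2^(l+2)*2^2 := by rw [← pow_add]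
    rw [hpow] at h2
    exact (mul_dvd_mul_iff_left (pow_ne_zero (l+2) two_ne_zero')).mp h2
  have e1 : (2:ℤ_[2])^2 ∣ 2^t*X := dvd_mul_of_dvd_left (pow_dvd_pow 2 ht2) X
  have e2 : (2:ℤ_[2])^2 ∣ 2^2*ε*(a:ℤ_[2]) := by
    exact dvd_mul_of_dvd_left (dvd_mul_right _ _) _
  have e3 : (2:ℤ_[2])^2 ∣ 2^(l+2) := pow_dvd_pow 2 (by omega)
  have e4 : (2:ℤ_[2])^2 ∣ 2^(l+4)*(a:ℤ_[2]) :=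
    dvd_mul_of_dvd_left (pow_dvd_pow 2 (by omega)) _
  have h5 : (2:ℤ_[2])^2 ∣ 2*ε := by
    have h := dvd_sub (dvd_sub (dvd_sub (dvd_sub e1 h3) e2) e3) e4
    rwa [show 2^t*X - (2^t*X - ε - 2^2*ε*(a:ℤ_[2]) - X) - 2^2*ε*(a:ℤ_[2])
      - 2^(l+2) - 2^(l+4)*(a:ℤ_[2]) = 2*ε by linear_combination hX] at h
  have h6 : (2:ℤ_[2]) ∣ ε := by
    have hpow : (2:ℤ_[2])^2 = 2*2 := by ring
    rw [hpow] at h5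
    exact (mul_dvd_mul_iff_left two_ne_zero').mp h5
  exact odd_eps hε h6

lemma a_eq (ht2 : 2 ≤ t) {a a' : ℕ} (ha : a < 2^(t-1)) (ha' : a' < 2^(t-1))
    (hd : (2:ℤ_[2])^(t-1) ∣ ((a:ℤ_[2]) - (a':ℤ_[2]))) : a = a' := by
  have hd2 : (2:ℤ)^(t-1) ∣ (a:ℤ) - a' := by
    rw [← int_pow_dvd_iff]
    push_cast
    exact hd
  by_contra hne
  have h0 : (a:ℤ) - a' ≠ 0 := by omega
  have habs := Int.le_of_dvd (abs_pos.mpr h0) ((dvd_abs _ _).mpr hd2)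
  have hP1 : (a:ℤ) < (2:ℤ)^(t-1) := by exact_mod_cast ha
  have hP2 : (a':ℤ) < (2:ℤ)^(t-1) := by exact_mod_cast ha'
  have hn1 : (0:ℤ) ≤ (a:ℤ) := Int.natCast_nonneg a
  have hn2 : (0:ℤ) ≤ (a':ℤ) := Int.natCast_nonneg a'
  have habs' : |(a:ℤ) - a'| < (2:ℤ)^(t-1) :=
    abs_sub_lt_iff.mpr ⟨by linarith, by linarith⟩
  linarith

lemma l_eq_aux {l l' : ℕ} {u u' : ℤ_[2]} (hlt : l < l')
    (he : 2^(l+2)*u = 2^(l'+2)*u') (hou : ¬(2:ℤ_[2])∣u) : False := by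
  have h1 : (2:ℤ_[2])^(l+2+1) ∣ 2^(l'+2)*u' :=
    dvd_mul_of_dvd_left (pow_dvd_pow 2 (by omega)) _
  rw [← he] at h1
  exact hou (pow_cancel h1)

lemma params_eq (ht2 : 2 ≤ t) {l a l' a' : ℕ} {ε ε' X X' z : ℤ_[2]}
    (ha : a < 2^(t-1)) (ha' : a' < 2^(t-1))
    (hε : ε = 1 ∨ ε = -1) (hε' : ε' = 1 ∨ ε' = -1)
    (hX : X = ε + 2^(l+2) + 2^(l+4)*(a:ℤ_[2]))
    (hX' : X' = ε' + 2^(l'+2) + 2^(l'+4)*(a':ℤ_[2]))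
    (hz : (2:ℤ_[2])^(t+l+3) ∣ z - X ∨
      (2:ℤ_[2])^(t+l+3) ∣ z - (Ring.inverse X + 2^(t+l+2)))
    (hz' : (2:ℤ_[2])^(t+l'+3) ∣ z - X' ∨
      (2:ℤ_[2])^(t+l'+3) ∣ z - (Ring.inverse X' + 2^(t+l'+2))) :
    l = l' ∧ a = a' ∧ ε = ε' := by
  obtain ⟨u, hu, hou⟩ := mem_decomp hε ht2 hX hz
  obtain ⟨u', hu', hou'⟩ := mem_decomp hε' ht2 hX' hz'
  -- ε = ε'
  have hee : ε = ε' := by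
    have d1 : (2:ℤ_[2])^2 ∣ z - ε := hu ▸ dvd_mul_of_dvd_left (pow_dvd_pow 2 (by omega)) _
    have d2 : (2:ℤ_[2])^2 ∣ z - ε' := hu' ▸ dvd_mul_of_dvd_left (pow_dvd_pow 2 (by omega)) _
    have d3 : (2:ℤ_[2])^2 ∣ ε - ε' := by
      have h := dvd_sub d2 d1
      rwa [show (z - ε') - (z - ε) = ε - ε' by ring] at h
    have hnd : ¬ (2:ℤ_[2])^2 ∣ (2:ℤ_[2]) := by
      intro h
      have h2 := (nat_pow_dvd_iff 2 2).mp
        (by rwa [show ((2:ℕ):ℤ_[2]) = (2:ℤ_[2]) by norm_num])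
      omega
    rcases hε with rfl | rfl <;> rcases hε' with rfl | rfl
    · rfl
    · exfalso; exact hnd (by have := d3; rwa [show (1:ℤ_[2]) - (-1) = 2 by ring] at this)
    · exfalso
      refine hnd ?_
      have h := d3.neg_right
      rwa [show -((-1:ℤ_[2]) - 1) = 2 by ring] at h
    · rfl
  subst hee
  -- l = l'
  have hll : l = l' := by
    have he : 2^(l+2)*u = 2^(l'+2)*u' := by rw [← hu, ← hu']
    rcases lt_trichotomy l l' with h | h | h
    · exact (l_eq_aux h he hou).elim
    · exact h
    · exact (l_eq_aux h he.symm hou').elim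
  subst hll
  refine ⟨rfl, ?_, rfl⟩
  -- a = a'
  obtain ⟨T, rfl⟩ : ∃ T, t = T+2 := ⟨t-2, by omega⟩
  have hcda : ∀ (b b' : ℕ) (Y Y' : ℤ_[2]), Y = ε + 2^(l+2) + 2^(l+4)*(b:ℤ_[2]) →
      Y' = ε + 2^(l+2) + 2^(l+4)*(b':ℤ_[2]) → b < 2^(T+2-1) → b' < 2^(T+2-1) →
      (2:ℤ_[2])^(T+2+l+3) ∣ Y - Y' → b = b' := by
    intro b b' Y Y' hY hY' hb hb' hdd
    have hYY : Y - Y' = 2^(l+4)*((b:ℤ_[2]) - b') := by rw [hY, hY']; ring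
    rw [hYY] at hdd
    have hpow : (2:ℤ_[2])^(T+2+l+3) = 2^(l+4)*2^(T+1) := by rw [← pow_add]; congr 1; omega
    rw [hpow] at hdd
    have hthis := (mul_dvd_mul_iff_left (pow_ne_zero (l+4) two_ne_zero')).mp hdd
    have hfin : (2:ℤ_[2])^(T+2-1) ∣ (b:ℤ_[2]) - (b':ℤ_[2]) := by
      simpa [show T+2-1 = T+1 by omega] using hthis
    exact a_eq (t := T+2) (by omega) hb hb' hfin
  rcases hz with h1 | h2
  · rcases hz' with h1' | h2'
    · -- both B1
      have hdd : (2:ℤ_[2])^(T+2+l+3) ∣ X - X' := by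
        have h := dvd_sub h1' h1
        rwa [show (z - X') - (z - X) = X - X' by ring] at h
      exact hcda a a' X X' hX hX' ha ha' hdd
    · exact absurd (J_of_B1 (by omega) hX h1) (notJ_of_B2 (by omega) hε hX' h2')
  · rcases hz' with h1' | h2'
    · exact absurd (J_of_B1 (by omega) hX' h1') (notJ_of_B2 (by omega) hε hX h2)
    · -- both B2
      have hdd : (2:ℤ_[2])^(T+2+l+3) ∣ Ring.inverse X - Ring.inverse X' := by
        have h := dvd_sub h2' h2
        rwa [show (z - (Ring.inverse X' + 2^(T+2+l+2))) - (z - (Ring.inverse X + 2^(T+2+l+2)))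
          = Ring.inverse X - Ring.inverse X' by ring] at h
      have hunX := unit_center hε hX
      have hunX' := unit_center hε hX'
      have hi1 : X * Ring.inverse X = 1 := Ring.mul_inverse_cancel X hunX
      have hi2 : X' * Ring.inverse X' = 1 := Ring.mul_inverse_cancel X' hunX'
      have hid : X' - X = (X * X') * (Ring.inverse X - Ring.inverse X') := by
        linear_combination (-X')*hi1 + X*hi2
      have hdd2 : (2:ℤ_[2])^(T+2+l+3) ∣ X' - X := by
        rw [hid]
        exact hdd.mul_left _
      exact hcda a a' X X' hX hX' ha ha' (by
        have h := hdd2.neg_right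
        rwa [show -(X' - X) = X - X' by ring] at h)

end Disjoint


section Coverage

variable {t : ℕ}

lemma pow_dvd_iff_toZModPow (k : ℕ) (x : ℤ_[2]) :
    (2:ℤ_[2])^k ∣ x ↔ PadicInt.toZModPow k x = 0 := by
  have h1 := PadicInt.ker_toZModPow (p := 2) k
  constructor
  · intro h
    have hx : x ∈ RingHom.ker (PadicInt.toZModPow (p := 2) k) := by
      rw [h1, Ideal.mem_span_singleton]
      rwa [show ((2:ℕ):ℤ_[2]) = (2:ℤ_[2]) by norm_num]
    simpa [RingHom.mem_ker] using hx
  · intro h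
    have hx : x ∈ RingHom.ker (PadicInt.toZModPow (p := 2) k) := by
      simpa [RingHom.mem_ker] using h
    rw [h1, Ideal.mem_span_singleton] at hx
    rwa [show ((2:ℕ):ℤ_[2]) = (2:ℤ_[2]) by norm_num] at hx

lemma odd_split {u : ℤ_[2]} (hou : ¬(2:ℤ_[2])∣u) :
    (2:ℤ_[2])^2 ∣ u - 1 ∨ (2:ℤ_[2])^2 ∣ u + 1 := by
  obtain ⟨c, hc⟩ := odd_sub u 1 hou odd_one
  by_cases h : (2:ℤ_[2]) ∣ c
  · obtain ⟨e, he⟩ := h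
    exact Or.inl ⟨e, by rw [hc, he]; ring⟩
  · obtain ⟨e, he⟩ := odd_add c 1 h odd_one
    exact Or.inr ⟨e, by linear_combination hc + 2*he⟩

lemma exact_val {y : ℤ_[2]} (hy : y ≠ 0) (h4 : (2:ℤ_[2])^2 ∣ y) :
    ∃ l u, y = 2^(l+2)*u ∧ ¬(2:ℤ_[2])∣u := by
  classical
  have hex : ∃ k, ¬(2:ℤ_[2])^k ∣ y := by
    by_contra hall
    push_neg at hall
    have hpos : 0 < ‖y‖ := norm_pos_iff.mpr hy
    obtain ⟨n, hn2⟩ := exists_pow_lt_of_lt_one hpos (by norm_num : (1:ℝ)/2 < 1)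
    have hn : ‖y‖ ≤ (2:ℝ)^(-(n:ℤ)) := by
      have h1 := PadicInt.norm_le_pow_iff_mem_span_pow (p:=2) y n
      rw [Ideal.mem_span_singleton] at h1
      rw [show ((2:ℕ):ℝ) = (2:ℝ) by norm_num,
        show ((2:ℕ):ℤ_[2]) = (2:ℤ_[2]) by norm_num] at h1
      exact h1.mpr (hall n)
    have heq : (2:ℝ)^(-(n:ℤ)) = ((1:ℝ)/2)^n := by
      rw [zpow_neg, zpow_natCast, one_div, inv_pow]
    rw [heq] at hn
    linarith
  have hnd : ¬(2:ℤ_[2])^(Nat.find hex) ∣ y := Nat.find_spec hex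
  have hk3 : 3 ≤ Nat.find hex := by
    by_contra h
    push_neg at h
    exact hnd (dvd_trans (pow_dvd_pow 2 (by omega)) h4)
  have hdvd : (2:ℤ_[2])^(Nat.find hex - 1) ∣ y :=
    not_not.mp (Nat.find_min hex (by omega))
  obtain ⟨u, hu⟩ := hdvd
  refine ⟨Nat.find hex - 3, u, ?_, ?_⟩
  · rw [show Nat.find hex - 3 + 2 = Nat.find hex - 1 by omega]
    exact hu
  · intro h2u
    obtain ⟨e, he⟩ := h2u
    refine hnd ⟨e, ?_⟩
    have hp : (2:ℤ_[2])^(Nat.find hex) = 2^(Nat.find hex - 1)*2 := by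
      rw [← pow_succ]
      congr 1
      omega
    calc y = 2^(Nat.find hex - 1)*u := hu
      _ = 2^(Nat.find hex - 1)*(2*e) := by rw [he]
      _ = (2^(Nat.find hex - 1)*2)*e := by ring
      _ = 2^(Nat.find hex)*e := by rw [hp]

lemma exists_a_B1 (ht2 : 2 ≤ t) {ε : ℤ_[2]} (hε : ε = 1 ∨ ε = -1) (l : ℕ)
    {z u : ℤ_[2]} (hzu : z - ε = 2^(l+2)*u) (hu1 : (2:ℤ_[2])^2 ∣ u - 1) :
    ∃ a : ℕ, a < 2^(t-1) ∧
      (2:ℤ_[2])^(t+l+3) ∣ z - (ε + 2^(l+2) + 2^(l+4)*(a:ℤ_[2])) := by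
  haveI : NeZero (2^(t-1)) := ⟨by positivity⟩
  obtain ⟨c, hc⟩ := hu1
  set a : ℕ := (PadicInt.toZModPow (t-1) c).val with hadef
  have ha : a < 2^(t-1) := ZMod.val_lt _
  have hker : (2:ℤ_[2])^(t-1) ∣ c - (a:ℤ_[2]) := by
    rw [pow_dvd_iff_toZModPow, map_sub, map_natCast, hadef, ZMod.natCast_val, ZMod.cast_id]
    exact sub_self _
  obtain ⟨s, hs⟩ := hker
  refine ⟨a, ha, ⟨s, ?_⟩⟩
  obtain ⟨T, rfl⟩ : ∃ T, t = T+2 := ⟨t-2, by omega⟩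
  rw [show T+2-1 = T+1 by omega] at hs
  linear_combination hzu + 2^(l+2)*hc + 2^(l+4)*hs

lemma c2_sub_eps {t l a : ℕ} {ε X : ℤ_[2]} (hε : ε = 1 ∨ ε = -1)
    (hX : X = ε + 2^(l+2) + 2^(l+4)*(a:ℤ_[2])) :
    Ring.inverse X + 2^(t+l+2) - ε
      = 2^(l+2)*(-ε*Ring.inverse X*(1+2^2*(a:ℤ_[2])) + 2^t) := by
  have heps := eps_sq hε
  have hinv : X * Ring.inverse X = 1 := Ring.mul_inverse_cancel X (unit_center hε hX)
  linear_combination ε*hinv - ε*Ring.inverse X*hX - Ring.inverse X*heps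

lemma U_diff {t l a a' : ℕ} {ε X X' : ℤ_[2]} (hε : ε = 1 ∨ ε = -1)
    (hX : X = ε + 2^(l+2) + 2^(l+4)*(a:ℤ_[2]))
    (hX' : X' = ε + 2^(l+2) + 2^(l+4)*(a':ℤ_[2])) :
    (-ε*Ring.inverse X'*(1+2^2*(a':ℤ_[2])) + 2^t)
      - (-ε*Ring.inverse X*(1+2^2*(a:ℤ_[2])) + 2^t)
      = -2^2*(Ring.inverse X * Ring.inverse X' * ((a':ℤ_[2]) - (a:ℤ_[2]))) := by
  have heps := eps_sq hε
  have hinv : X * Ring.inverse X = 1 := Ring.mul_inverse_cancel X (unit_center hε hX)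
  have hinv' : X' * Ring.inverse X' = 1 := Ring.mul_inverse_cancel X' (unit_center hε hX')
  linear_combination (ε*Ring.inverse X'*(1+2^2*(a':ℤ_[2])))*hinv
    - (ε*Ring.inverse X*(1+2^2*(a:ℤ_[2])))*hinv'
    - (2^2*Ring.inverse X*Ring.inverse X'*((a':ℤ_[2])-(a:ℤ_[2])))*heps
    - (ε*Ring.inverse X*Ring.inverse X'*(1+2^2*(a':ℤ_[2])))*hX
    + (ε*Ring.inverse X*Ring.inverse X'*(1+2^2*(a:ℤ_[2])))*hX'

lemma exists_a_B2 (ht2 : 2 ≤ t) {ε : ℤ_[2]} (hε : ε = 1 ∨ ε = -1) (l : ℕ)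
    {z u : ℤ_[2]} (hzu : z - ε = 2^(l+2)*u) (hu3 : (2:ℤ_[2])^2 ∣ u + 1) :
    ∃ a : ℕ, a < 2^(t-1) ∧
      (2:ℤ_[2])^(t+l+3) ∣
        z - (Ring.inverse (ε + 2^(l+2) + 2^(l+4)*(a:ℤ_[2])) + 2^(t+l+2)) := by
  haveI : NeZero (2^(t-1)) := ⟨by positivity⟩
  have hUn : ∀ b : ℕ, IsUnit (ε + 2^(l+2) + 2^(l+4)*(b:ℤ_[2])) :=
    fun b => unit_center hε rfl
  have hinvb : ∀ b : ℕ, (ε + 2^(l+2) + 2^(l+4)*(b:ℤ_[2]))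
      * Ring.inverse (ε + 2^(l+2) + 2^(l+4)*(b:ℤ_[2])) = 1 :=
    fun b => Ring.mul_inverse_cancel _ (hUn b)
  have hDD : ∀ b : ℕ, ∃ d, u - (-ε*Ring.inverse (ε + 2^(l+2) + 2^(l+4)*(b:ℤ_[2]))
      *(1+2^2*(b:ℤ_[2])) + 2^t) = 2^2*d := by
    intro b
    have h1 : (ε + 2^(l+2) + 2^(l+4)*(b:ℤ_[2])) *
        (1 - ε*Ring.inverse (ε + 2^(l+2) + 2^(l+4)*(b:ℤ_[2]))*(1+2^2*(b:ℤ_[2])))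
        = 2^(l+2) + 2^(l+4)*(b:ℤ_[2]) - 2^2*ε*(b:ℤ_[2]) := by
      linear_combination (-ε*(1+2^2*(b:ℤ_[2])))*hinvb b
    have h2 : (2:ℤ_[2])^2 ∣ (ε + 2^(l+2) + 2^(l+4)*(b:ℤ_[2])) *
        (1 - ε*Ring.inverse (ε + 2^(l+2) + 2^(l+4)*(b:ℤ_[2]))*(1+2^2*(b:ℤ_[2]))) := by
      rw [h1]
      refine dvd_sub (dvd_add (pow_dvd_pow 2 (by omega))
        (dvd_mul_of_dvd_left (pow_dvd_pow 2 (by omega)) _)) ?_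
      exact dvd_mul_of_dvd_left (dvd_mul_right _ _) _
    have h3 := dvd_of_unit_mul (hUn b) h2
    have h6 := dvd_sub (dvd_sub hu3 h3) (pow_dvd_pow (2:ℤ_[2]) ht2)
    have h7 : u + 1 - (1 - ε*Ring.inverse (ε + 2^(l+2) + 2^(l+4)*(b:ℤ_[2]))
        *(1+2^2*(b:ℤ_[2]))) - 2^t
        = u - (-ε*Ring.inverse (ε + 2^(l+2) + 2^(l+4)*(b:ℤ_[2]))*(1+2^2*(b:ℤ_[2])) + 2^t) := by
      ring
    rw [h7] at h6
    exact h6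
  choose dd hdd using hDD
  have hinj : Function.Injective
      (fun α : ZMod (2^(t-1)) => PadicInt.toZModPow (t-1) (dd α.val)) := by
    intro α β h
    simp only at h
    have hker : (2:ℤ_[2])^(t-1) ∣ dd α.val - dd β.val := by
      rw [pow_dvd_iff_toZModPow, map_sub, sub_eq_zero]
      exact h
    obtain ⟨s, hs⟩ := hker
    have hud := U_diff (t := t) (l := l) (a := α.val) (a' := β.val) hε rfl rfl
    have hcan : (2:ℤ_[2])^(t-1) ∣ Ring.inverse (ε + 2^(l+2) + 2^(l+4)*((α.val:ℕ):ℤ_[2]))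
        * Ring.inverse (ε + 2^(l+2) + 2^(l+4)*((β.val:ℕ):ℤ_[2]))
        * (((β.val:ℕ):ℤ_[2]) - ((α.val:ℕ):ℤ_[2])) := by
      refine ⟨-s, ?_⟩
      have h1 := hdd α.val
      have h2 := hdd β.val
      have hE : (2:ℤ_[2])^2 * (Ring.inverse (ε + 2^(l+2) + 2^(l+4)*((α.val:ℕ):ℤ_[2]))
          * Ring.inverse (ε + 2^(l+2) + 2^(l+4)*((β.val:ℕ):ℤ_[2]))
          * (((β.val:ℕ):ℤ_[2]) - ((α.val:ℕ):ℤ_[2])))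
          = 2^2 * (2^(t-1)*(-s)) := by
        linear_combination hud + h2 - h1 - 2^2*hs
      exact mul_left_cancel₀ (pow_ne_zero 2 two_ne_zero') hE
    have hcan2 : (2:ℤ_[2])^(t-1) ∣ (((β.val:ℕ):ℤ_[2]) - ((α.val:ℕ):ℤ_[2])) := by
      refine dvd_of_unit_mul (isUnit_of_odd (odd_inv (hUn β.val)))
        (dvd_of_unit_mul (isUnit_of_odd (odd_inv (hUn α.val))) ?_)
      rwa [show Ring.inverse (ε + 2^(l+2) + 2^(l+4)*((α.val:ℕ):ℤ_[2]))
        * (Ring.inverse (ε + 2^(l+2) + 2^(l+4)*((β.val:ℕ):ℤ_[2]))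
        * (((β.val:ℕ):ℤ_[2]) - ((α.val:ℕ):ℤ_[2])))
        = Ring.inverse (ε + 2^(l+2) + 2^(l+4)*((α.val:ℕ):ℤ_[2]))
        * Ring.inverse (ε + 2^(l+2) + 2^(l+4)*((β.val:ℕ):ℤ_[2]))
        * (((β.val:ℕ):ℤ_[2]) - ((α.val:ℕ):ℤ_[2])) by ring]
    have hv : β.val = α.val := a_eq ht2 (ZMod.val_lt β) (ZMod.val_lt α) hcan2
    exact (ZMod.val_injective _ hv).symm
  have hsurj := Finite.surjective_of_injective hinj
  obtain ⟨α, hα⟩ := hsurj 0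
  simp only at hα
  have hkera : (2:ℤ_[2])^(t-1) ∣ dd α.val := by
    rw [pow_dvd_iff_toZModPow]
    exact hα
  obtain ⟨s, hs⟩ := hkera
  refine ⟨α.val, ZMod.val_lt α, ⟨s, ?_⟩⟩
  have hc2 := c2_sub_eps (t := t) (l := l) (a := α.val) (ε := ε) hε rfl
  have h1 := hdd α.val
  have hs2 : (2:ℤ_[2])^(l+4)*dd α.val = 2^(t+l+3)*s := by
    rw [hs, ← mul_assoc, ← pow_add, show l+4+(t-1) = t+l+3 by omega]
  linear_combination hzu - hc2 + 2^(l+2)*h1 + hs2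

end Coverage

end MZ2

open MZ2 in
/-- Minimal decomposition for `x ↦ x^m` on `ℤ_2` with `m ≡ 3 (mod 4)`:
with `x₀ = ε + 2^(l+2) + 2^(l+4)a` (a 2-adic unit), the sets
`M_{l,a,ε} = (x₀ + 2^(t+l+3)ℤ_2) ∪ (x₀⁻¹ + 2^(t+l+2) + 2^(t+l+3)ℤ_2)` are pairwise
disjoint clopen minimal components, and together with `{1, -1}` they cover exactly
the 2-adic units. -/
theorem monomial_Z2_three_mod_four_decomposition (m : ℕ) (hm : 2 ≤ m) (hmod : m % 4 = 3)
    (t : ℕ) (ht : t = padicValNat 2 (m + 1))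
    (x₀ : ℕ → ℕ → ℤ_[2] → ℤ_[2])
    (hx₀ : ∀ l a ε, x₀ l a ε = ε + 2 ^ (l + 2) + 2 ^ (l + 4) * (a : ℤ_[2]))
    (M : ℕ → ℕ → ℤ_[2] → Set ℤ_[2])
    (hM : ∀ l a ε, M l a ε =
      {x : ℤ_[2] | (2 : ℤ_[2]) ^ (t + l + 3) ∣ x - x₀ l a ε} ∪
      {x : ℤ_[2] | (2 : ℤ_[2]) ^ (t + l + 3) ∣
        x - (Ring.inverse (x₀ l a ε) + 2 ^ (t + l + 2))}) :
    (∀ l a (ε : ℤ_[2]), a < 2 ^ (t - 1) → (ε = 1 ∨ ε = -1) → IsUnit (x₀ l a ε)) ∧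
    (∀ l a (ε : ℤ_[2]) l' a' (ε' : ℤ_[2]),
      a < 2 ^ (t - 1) → a' < 2 ^ (t - 1) → (ε = 1 ∨ ε = -1) → (ε' = 1 ∨ ε' = -1) →
      (l, a, ε) ≠ (l', a', ε') → Disjoint (M l a ε) (M l' a' ε')) ∧
    (∀ l a (ε : ℤ_[2]), a < 2 ^ (t - 1) → (ε = 1 ∨ ε = -1) →
      IsClopen (M l a ε) ∧
      (∀ x ∈ M l a ε, x ^ m ∈ M l a ε) ∧
      (∀ x ∈ M l a ε, M l a ε ⊆ closure (Set.range fun n : ℕ => x ^ m ^ n))) ∧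
    ((⋃ l : ℕ, ⋃ a ∈ Finset.range (2 ^ (t - 1)), ⋃ ε ∈ ({1, -1} : Set ℤ_[2]), M l a ε)
        ∪ {1, -1} = {x : ℤ_[2] | ¬ (2 : ℤ_[2]) ∣ x}) := by
  have hdvd : 2^t ∣ m+1 := ht ▸ pow_padicValNat_dvd
  have hndvd : ¬2^(t+1) ∣ m+1 := by
    rw [ht]
    exact pow_succ_padicValNat_not_dvd (by omega)
  have ht2 : 2 ≤ t := by
    by_contra h
    push_neg at h
    have h4 : (2:ℕ)^2 ∣ m+1 := by
      rw [show (2:ℕ)^2 = 4 by norm_num]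
      omega
    exact hndvd (dvd_trans (pow_dvd_pow 2 (by omega : t+1 ≤ 2)) h4)
  refine ⟨?_, ?_, ?_, ?_⟩
  · -- units
    intro l a ε _ hε
    rw [hx₀]
    exact unit_center hε rfl
  · -- disjoint
    intro l a ε l' a' ε' ha ha' hε hε' hne
    rw [Set.disjoint_left]
    intro z hzM hzM'
    apply hne
    rw [hM] at hzM hzM'
    simp only [Set.mem_union, Set.mem_setOf_eq] at hzM hzM'
    obtain ⟨h1, h2, h3⟩ := params_eq ht2 ha ha' hε hε' (hx₀ l a ε) (hx₀ l' a' ε') hzM hzM'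
    subst h1; subst h2; subst h3
    rfl
  · -- clopen, invariance, minimality
    intro l a ε ha hε
    refine ⟨?_, ?_, ?_⟩
    · rw [hM]
      exact (isClopen_cong _ _).union (isClopen_cong _ _)
    · intro x hx
      rw [hM] at hx ⊢
      simp only [Set.mem_union, Set.mem_setOf_eq] at hx ⊢
      rcases hx with h | h
      · exact Or.inr (map_B1 hm hmod hdvd hndvd ht2 hε (hx₀ l a ε) h)
      · exact Or.inl (map_B2 hm hmod hdvd hndvd ht2 hε (hx₀ l a ε) h)
    · intro x hx y hy
      rw [hM] at hx hy
      simp only [Set.mem_union, Set.mem_setOf_eq] at hx hy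
      exact orbit_dense hm hmod hdvd hndvd ht2 hε (hx₀ l a ε) x y hx hy
  · -- coverage
    ext z
    simp only [Set.mem_union, Set.mem_iUnion, Set.mem_setOf_eq, Set.mem_insert_iff,
      Set.mem_singleton_iff, Finset.mem_range, exists_prop]
    constructor
    · rintro (⟨l, a, ha, ε, hε, hz⟩ | hz1)
      · rw [hM] at hz
        simp only [Set.mem_union, Set.mem_setOf_eq] at hz
        obtain ⟨u, hu, hou⟩ := mem_decomp hε ht2 (hx₀ l a ε) hz
        intro h2z
        have : (2:ℤ_[2]) ∣ ε := by
          have hd : (2:ℤ_[2]) ∣ 2^(l+2)*u :=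
            dvd_mul_of_dvd_left (dvd_pow_self 2 (by omega)) _
          have := dvd_sub h2z hd
          rwa [show z - 2^(l+2)*u = ε by linear_combination hu] at this
        exact odd_eps hε this
      · rcases hz1 with rfl | rfl
        · exact odd_one
        · exact odd_neg odd_one
    · intro hz
      obtain ⟨c, hc⟩ := odd_sub z 1 hz odd_one
      obtain ⟨ε, hε, h4⟩ : ∃ ε : ℤ_[2], (ε = 1 ∨ ε = -1) ∧ (2:ℤ_[2])^2 ∣ z - ε := by
        by_cases h : (2:ℤ_[2]) ∣ c
        · obtain ⟨e, he⟩ := h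
          exact ⟨1, Or.inl rfl, ⟨e, by rw [hc, he]; ring⟩⟩
        · obtain ⟨e, he⟩ := odd_add c 1 h odd_one
          exact ⟨-1, Or.inr rfl, ⟨e, by linear_combination hc + 2*he⟩⟩
      by_cases hzeps : z = ε
      · subst hzeps
        exact Or.inr (by tauto)
      · obtain ⟨l, u, hul, hou⟩ := exact_val (sub_ne_zero.mpr hzeps) h4
        left
        rcases odd_split hou with h1 | h1
        · obtain ⟨a, ha, hdvd1⟩ := exists_a_B1 ht2 hε l hul h1
          refine ⟨l, a, ha, ε, hε, ?_⟩
          rw [hM, hx₀]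
          exact Or.inl hdvd1
        · obtain ⟨a, ha, hdvd1⟩ := exists_a_B2 ht2 hε l hul h1
          refine ⟨l, a, ha, ε, hε, ?_⟩
          rw [hM, hx₀]
          exact Or.inr hdvd1
end

section
/- Let m ≥ 2 be an integer with m ≡ 1 (mod 6), let f(x) = x^m on ℤ_3, and let t = ν_3(m − 1). For each integer l ≥ 0, each i ∈ {1, 2}, each a ∈ {0, 1, …, 3^(t−1) − 1}, and each sign ε ∈ {1, −1}, set M_{l,a,i,ε} = ε + 3^(l+1)·i + 3^(l+2)·a + 3^(t+l+1)ℤ_3. Then the sets M_{l,a,i,ε} are pairwise disjoint clopen subsets of ℤ_3, each M_{l,a,i,ε} is a minimal component of f (f(M_{l,a,i,ε}) ⊆ M_{l,a,i,ε} and every forward orbit of f in M_{l,a,i,ε} is dense in M_{l,a,i,ε}), and the union of all the M_{l,a,i,ε} together with the fixed-point set {1, −1} equals the set of 3-adic units ℤ_3 \ 3ℤ_3. -/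
open Filter Topology

namespace MonoAux

lemma three_cast : ((3:ℕ):ℤ_[3]) = 3 := by norm_num

lemma nat_dvd (k N : ℕ) : (3:ℤ_[3])^k ∣ (N:ℤ_[3]) ↔ 3^k ∣ N := by
  have h := PadicInt.pow_p_dvd_int_iff (p := 3) k (N : ℤ)
  rw [three_cast] at h
  push_cast at h
  rw [h]
  exact_mod_cast Iff.rfl

lemma int_dvd (k : ℕ) (d : ℤ) : (3:ℤ_[3])^k ∣ (d:ℤ_[3]) ↔ (3:ℤ)^k ∣ d := by
  have h := PadicInt.pow_p_dvd_int_iff (p := 3) k d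
  rw [three_cast] at h
  push_cast at h
  exact h

lemma not_dvd_one : ¬ (3:ℤ_[3]) ∣ 1 := by
  intro h
  have := (nat_dvd 1 1).mp (by simpa using h)
  omega

lemma not_dvd_two : ¬ (3:ℤ_[3]) ∣ 2 := by
  intro h
  have := (nat_dvd 1 2).mp (by push_cast; simpa using h)
  omega

lemma isUnit_iff_not_dvd (x : ℤ_[3]) : IsUnit x ↔ ¬ (3:ℤ_[3]) ∣ x := by
  have h1 := PadicInt.norm_lt_one_iff_dvd x
  rw [three_cast] at h1
  rw [PadicInt.isUnit_iff, ← h1]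
  constructor
  · intro h hc; rw [h] at hc; exact lt_irrefl _ hc
  · intro h
    rcases lt_or_eq_of_le (PadicInt.norm_le_one x) with h' | h'
    · exact absurd h' h
    · exact h'

lemma prime3 : Prime (3:ℤ_[3]) := by
  have := PadicInt.prime_p (p := 3)
  rwa [three_cast] at this

lemma three_ne_zero' : (3:ℤ_[3]) ≠ 0 := prime3.ne_zero


lemma cube_identity (u : ℤ_[3]) : u^3 - 1 = 3*(u-1) + 3*(u-1)^2 + (u-1)^3 := by ring

lemma cube_dvd {u : ℤ_[3]} {e : ℕ} (he : 1 ≤ e) (h : (3:ℤ_[3])^e ∣ u - 1) :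
    (3:ℤ_[3])^(e+1) ∣ u^3 - 1 := by
  have h2 : (3:ℤ_[3])^(e*2) ∣ (u-1)^2 := by
    rw [pow_mul]; exact pow_dvd_pow_of_dvd h 2
  have h3 : (3:ℤ_[3])^(e*3) ∣ (u-1)^3 := by
    rw [pow_mul]; exact pow_dvd_pow_of_dvd h 3
  rw [cube_identity]
  refine dvd_add (dvd_add ?_ ?_) ?_
  · rw [pow_succ, mul_comm]
    exact mul_dvd_mul_left 3 h
  · refine dvd_trans (pow_dvd_pow 3 (by omega : e+1 ≤ e*2+1)) ?_
    rw [pow_succ, mul_comm]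
    exact mul_dvd_mul_left 3 h2
  · exact dvd_trans (pow_dvd_pow 3 (by omega : e+1 ≤ e*3)) h3

lemma cube_exact {u : ℤ_[3]} {e : ℕ} (he : 1 ≤ e) (h : (3:ℤ_[3])^e ∣ u - 1)
    (h2 : ¬ (3:ℤ_[3])^(e+1) ∣ u - 1) : ¬ (3:ℤ_[3])^(e+2) ∣ u^3 - 1 := by
  intro hc
  apply h2
  have hq : (3:ℤ_[3])^(e*2) ∣ (u-1)^2 := by
    rw [pow_mul]; exact pow_dvd_pow_of_dvd h 2
  have hcub : (3:ℤ_[3])^(e*3) ∣ (u-1)^3 := by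
    rw [pow_mul]; exact pow_dvd_pow_of_dvd h 3
  have hrest : (3:ℤ_[3])^(e+2) ∣ 3*(u-1)^2 + (u-1)^3 := by
    refine dvd_add ?_ ?_
    · refine dvd_trans (pow_dvd_pow 3 (by omega : e+2 ≤ e*2+1)) ?_
      rw [pow_succ, mul_comm]
      exact mul_dvd_mul_left 3 hq
    · exact dvd_trans (pow_dvd_pow 3 (by omega : e+2 ≤ e*3)) hcub
  have key : 3*(u-1) = (u^3 - 1) - (3*(u-1)^2 + (u-1)^3) := by
    rw [cube_identity]; ring
  have h31 : (3:ℤ_[3])^(e+2) ∣ 3*(u-1) := by rw [key]; exact dvd_sub hc hrest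
  have : (3:ℤ_[3]) * (3:ℤ_[3])^(e+1) ∣ (3:ℤ_[3]) * (u-1) := by
    rw [← pow_succ']; exact h31
  exact (mul_dvd_mul_iff_left three_ne_zero').mp this

lemma pow3_dvd {u : ℤ_[3]} {e : ℕ} (he : 1 ≤ e) (h : (3:ℤ_[3])^e ∣ u - 1) :
    ∀ s, (3:ℤ_[3])^(e+s) ∣ u^(3^s) - 1 := by
  intro s
  induction s with
  | zero => simpa using h
  | succ s ih =>
    have : u^(3^(s+1)) = (u^(3^s))^3 := by rw [← pow_mul, pow_succ]
    rw [this, show e + (s+1) = (e+s) + 1 by omega]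
    exact cube_dvd (by omega) ih

lemma pow3_exact {u : ℤ_[3]} {e : ℕ} (he : 1 ≤ e) (h : (3:ℤ_[3])^e ∣ u - 1)
    (h2 : ¬ (3:ℤ_[3])^(e+1) ∣ u - 1) :
    ∀ s, ¬ (3:ℤ_[3])^(e+s+1) ∣ u^(3^s) - 1 := by
  intro s
  induction s with
  | zero => simpa using h2
  | succ s ih =>
    have heq : u^(3^(s+1)) = (u^(3^s))^3 := by rw [← pow_mul, pow_succ]
    rw [heq, show e + (s+1) + 1 = (e+s) + 2 by omega]
    exact cube_exact (by omega) (pow3_dvd he h s) ih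

lemma pow_dvd_general {u : ℤ_[3]} {e : ℕ} (he : 1 ≤ e) (h : (3:ℤ_[3])^e ∣ u - 1)
    {s k : ℕ} (hk : 3^s ∣ k) : (3:ℤ_[3])^(e+s) ∣ u^k - 1 := by
  obtain ⟨q, rfl⟩ := hk
  have : u^(3^s * q) - 1 = (u^(3^s))^q - 1^q := by rw [← pow_mul, one_pow]
  rw [this]
  exact dvd_trans (pow3_dvd he h s) (sub_dvd_pow_sub_pow _ _ _)

lemma sum_unit {u : ℤ_[3]} {k : ℕ} (hu : (3:ℤ_[3]) ∣ u - 1) (hk : ¬ 3 ∣ k) :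
    IsUnit (∑ i ∈ Finset.range k, u^i) := by
  rw [isUnit_iff_not_dvd]
  intro hd
  have hterm : ∀ i ∈ Finset.range k, (3:ℤ_[3]) ∣ u^i - 1 := by
    intro i _
    have : u^i - 1 = u^i - 1^i := by rw [one_pow]
    rw [this]
    exact dvd_trans hu (sub_dvd_pow_sub_pow _ _ _)
  have hsum : (3:ℤ_[3]) ∣ (∑ i ∈ Finset.range k, u^i) - k := by
    have : (∑ i ∈ Finset.range k, u^i) - (k:ℤ_[3]) = ∑ i ∈ Finset.range k, (u^i - 1) := by
      rw [Finset.sum_sub_distrib]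
      simp
    rw [this]
    exact Finset.dvd_sum hterm
  have : (3:ℤ_[3]) ∣ (k:ℤ_[3]) := by
    have := dvd_sub hd hsum
    simpa using this
  have := (nat_dvd 1 k).mp (by simpa using this)
  omega

lemma exact_pow {u : ℤ_[3]} {e : ℕ} (he : 1 ≤ e) (h : (3:ℤ_[3])^e ∣ u - 1)
    (h2 : ¬ (3:ℤ_[3])^(e+1) ∣ u - 1) {k : ℕ} (hk : k ≠ 0) :
    (3:ℤ_[3])^(e + padicValNat 3 k) ∣ u^k - 1 ∧
      ¬ (3:ℤ_[3])^(e + padicValNat 3 k + 1) ∣ u^k - 1 := by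
  set s := padicValNat 3 k with hs
  obtain ⟨k', hk'⟩ : 3^s ∣ k := pow_padicValNat_dvd
  have hk'0 : k' ≠ 0 := by rintro rfl; simp at hk'; exact hk hk'
  have hk'3 : ¬ 3 ∣ k' := by
    intro ⟨q, hq⟩
    have : 3^(s+1) ∣ k := ⟨q, by rw [hk', hq]; ring⟩
    exact pow_succ_padicValNat_not_dvd hk this
  set g := u^(3^s) with hg
  have hg1 : (3:ℤ_[3])^(e+s) ∣ g - 1 := pow3_dvd he h s
  have hg2 : ¬ (3:ℤ_[3])^(e+s+1) ∣ g - 1 := pow3_exact he h h2 s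
  have hgu : (3:ℤ_[3]) ∣ g - 1 := dvd_trans (by simpa using pow_dvd_pow (3:ℤ_[3]) (by omega : 1 ≤ e+s)) hg1
  have hS : IsUnit (∑ i ∈ Finset.range k', g^i) := sum_unit hgu hk'3
  have factor : u^k - 1 = (g - 1) * (∑ i ∈ Finset.range k', g^i) := by
    rw [hk', pow_mul, ← hg, mul_comm (g-1), geom_sum_mul]
  constructor
  · rw [factor]; exact dvd_mul_of_dvd_left hg1 _
  · intro hc
    rw [factor] at hc
    exact hg2 ((hS.dvd_mul_right).mp hc)


lemma not_dvd_pow_sub_one {g : ℤ_[3]} {E K : ℕ} (hE : 1 ≤ E) (hEK : E ≤ K)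
    (h1 : (3:ℤ_[3])^E ∣ g - 1) (h2 : ¬ (3:ℤ_[3])^(E+1) ∣ g - 1)
    {d : ℕ} (hd : d ≠ 0) (hdlt : d < 3^(K-E)) : ¬ (3:ℤ_[3])^K ∣ g^d - 1 := by
  intro hc
  set s := padicValNat 3 d with hs
  have h3s : 3^s ≤ d := Nat.le_of_dvd (Nat.pos_of_ne_zero hd) pow_padicValNat_dvd
  have hsK : s < K - E := by
    by_contra hcon
    push_neg at hcon
    exact absurd (lt_of_le_of_lt (le_trans (Nat.pow_le_pow_right (by norm_num) hcon) h3s) hdlt)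
      (lt_irrefl _)
  have hexact := (exact_pow hE h1 h2 hd).2
  exact hexact (dvd_trans (pow_dvd_pow 3 (by omega : E + s + 1 ≤ K)) hc)

lemma appr_dvd (R : ℕ) (y : ℤ_[3]) : (3:ℤ_[3])^R ∣ y - (y.appr R : ℤ_[3]) := by
  have := PadicInt.appr_spec R y
  rw [Ideal.mem_span_singleton, three_cast] at this
  exact this

lemma key_surj (g : ℤ_[3]) (E K : ℕ) (hE : 1 ≤ E) (hEK : E ≤ K)
    (h1 : (3:ℤ_[3])^E ∣ g - 1) (h2 : ¬ (3:ℤ_[3])^(E+1) ∣ g - 1) (z : ℤ_[3]) :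
    ∃ j : ℕ, (3:ℤ_[3])^K ∣ g^j - (1 + 3^E * z) := by
  have hgu : IsUnit g := by
    rw [isUnit_iff_not_dvd]
    intro hdvd
    have h31 : (3:ℤ_[3]) ∣ g - 1 := dvd_trans (by simpa using pow_dvd_pow (3:ℤ_[3]) hE) h1
    have : (3:ℤ_[3]) ∣ 1 := by
      have := dvd_sub hdvd h31
      simpa using this
    have := (nat_dvd 1 1).mp (by simpa using this)
    omega
  set R := K - E with hR
  have hdvdall : ∀ j : ℕ, (3:ℤ_[3])^E ∣ g^j - 1 := by
    intro j
    have := pow_dvd_general hE h1 (s := 0) (k := j) (by simp)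
    simpa using this
  choose w hw using fun j => (hdvdall j)
  have hwj : ∀ j : ℕ, g^j - 1 = 3^E * w j := hw
  have hlt : ∀ y : ℤ_[3], y.appr R < 3^R := fun y => by
    have := PadicInt.appr_lt y R; exact this
  set F : Fin (3^R) → Fin (3^R) := fun j => ⟨(w j).appr R, hlt _⟩ with hF
  have cancel : ∀ a b : ℕ, a < b → b < 3^R → (3:ℤ_[3])^K ∣ g^b - g^a → False := by
    intro a b hab hb hdvd
    have hfac : g^b - g^a = g^a * (g^(b-a) - 1) := by
      rw [mul_sub, mul_one, ← pow_add]
      congr 2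
      omega
    rw [hfac] at hdvd
    have := ((hgu.pow a).dvd_mul_left).mp hdvd
    exact not_dvd_pow_sub_one hE hEK h1 h2 (by omega) (by rw [← hR]; omega) this
  have hdiff : ∀ j j' : Fin (3^R), F j = F j' →
      (3:ℤ_[3])^K ∣ g^(j:ℕ) - g^(j':ℕ) := by
    intro j j' heq
    have heqn : ((w (j:ℕ)).appr R : ℤ_[3]) = ((w (j':ℕ)).appr R : ℤ_[3]) := by
      have h' : (w (j:ℕ)).appr R = (w (j':ℕ)).appr R := congrArg Fin.val heq
      exact_mod_cast h'
    have hwd : (3:ℤ_[3])^R ∣ w (j:ℕ) - w (j':ℕ) := by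
      have ha := appr_dvd R (w (j:ℕ))
      have hb := appr_dvd R (w (j':ℕ))
      have : w (j:ℕ) - w (j':ℕ) =
          (w (j:ℕ) - ((w (j:ℕ)).appr R : ℤ_[3])) - (w (j':ℕ) - ((w (j':ℕ)).appr R : ℤ_[3])) := by
        rw [heqn]; ring
      rw [this]
      exact dvd_sub ha hb
    have heq2 : g^(j:ℕ) - g^(j':ℕ) = 3^E * (w (j:ℕ) - w (j':ℕ)) := by
      have := hwj (j:ℕ)
      have := hwj (j':ℕ)
      calc g^(j:ℕ) - g^(j':ℕ) = (g^(j:ℕ) - 1) - (g^(j':ℕ) - 1) := by ring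
        _ = 3^E * w (j:ℕ) - 3^E * w (j':ℕ) := by rw [← hwj (j:ℕ), ← hwj (j':ℕ)]
        _ = 3^E * (w (j:ℕ) - w (j':ℕ)) := by ring
    rw [heq2, show K = E + R by omega, pow_add]
    exact mul_dvd_mul_left _ hwd
  have hinj : Function.Injective F := by
    intro j j' heq
    rcases lt_trichotomy (j:ℕ) (j':ℕ) with hlt' | heq' | hgt'
    · exact absurd ((hdiff j' j heq.symm)) (fun hd => cancel _ _ hlt' j'.isLt hd)
    · exact Fin.ext heq'
    · exact absurd ((hdiff j j' heq)) (fun hd => cancel _ _ hgt' j.isLt hd)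
  have hsurj : Function.Surjective F := Finite.injective_iff_surjective.mp hinj
  obtain ⟨j, hj⟩ := hsurj ⟨z.appr R, hlt z⟩
  refine ⟨(j:ℕ), ?_⟩
  have happrz : ((w (j:ℕ)).appr R : ℕ) = z.appr R := congrArg Fin.val hj
  have hwd : (3:ℤ_[3])^R ∣ w (j:ℕ) - z := by
    have ha := appr_dvd R (w (j:ℕ))
    have hb := appr_dvd R z
    have : w (j:ℕ) - z =
        (w (j:ℕ) - ((w (j:ℕ)).appr R : ℤ_[3])) - (z - (z.appr R : ℤ_[3])) := by
      rw [happrz]; ring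
    rw [this]
    exact dvd_sub ha hb
  have heq2 : g^(j:ℕ) - (1 + 3^E * z) = 3^E * (w (j:ℕ) - z) := by
    calc g^(j:ℕ) - (1 + 3^E * z) = (g^(j:ℕ) - 1) - 3^E * z := by ring
      _ = 3^E * w (j:ℕ) - 3^E * z := by rw [← hwj (j:ℕ)]
      _ = 3^E * (w (j:ℕ) - z) := by ring
  rw [heq2, show K = E + R by omega, pow_add]
  exact mul_dvd_mul_left _ hwd


lemma unit_of_sub_one {u : ℤ_[3]} (h : (3:ℤ_[3]) ∣ u - 1) : IsUnit u := by
  rw [isUnit_iff_not_dvd]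
  intro hd
  have : (3:ℤ_[3]) ∣ 1 := by
    have := dvd_sub hd h
    simpa using this
  have := (nat_dvd 1 1).mp (by simpa using this)
  omega

lemma exists_orbit_approx (m t : ℕ) (hm : 2 ≤ m)
    (ht1 : 1 ≤ t) (hmt : (3:ℤ_[3])^t ∣ (m:ℤ_[3]) - 1)
    (hmt' : ¬ (3:ℤ_[3])^(t+1) ∣ (m:ℤ_[3]) - 1)
    {l : ℕ} {u v : ℤ_[3]}
    (hu1 : (3:ℤ_[3])^(l+1) ∣ u - 1) (hu2 : ¬ (3:ℤ_[3])^(l+2) ∣ u - 1)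
    (huv : (3:ℤ_[3])^(t+l+1) ∣ v - u)
    (K : ℕ) : ∃ n : ℕ, (3:ℤ_[3])^K ∣ u^(m^n) - v := by
  set E := t + l + 1 with hE
  set P := E + K with hP
  have hUu : IsUnit u := unit_of_sub_one
    (dvd_trans (by simpa using pow_dvd_pow (3:ℤ_[3]) (by omega : 1 ≤ l+1)) hu1)
  obtain ⟨z0, hz0⟩ := huv
  set z : ℤ_[3] := z0 * ↑(hUu.unit⁻¹) with hz
  have hinv : (↑(hUu.unit⁻¹) : ℤ_[3]) * u = 1 := hUu.val_inv_mul
  have hvu : u * (1 + 3^E * z) = v := by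
    calc u * (1 + 3^E * z) = u + 3^E * z0 * ((↑(hUu.unit⁻¹) : ℤ_[3]) * u) := by rw [hz]; ring
      _ = u + 3^E * z0 := by rw [hinv, mul_one]
      _ = v := by rw [← hz0]; ring
  set g := u ^ (3^t) with hg
  have hg1 : (3:ℤ_[3])^E ∣ g - 1 := by
    have := pow3_dvd (by omega : 1 ≤ l+1) hu1 t
    rwa [show l + 1 + t = E by omega] at this
  have hg2 : ¬ (3:ℤ_[3])^(E+1) ∣ g - 1 := by
    have := pow3_exact (by omega : 1 ≤ l+1) hu1 hu2 t
    rwa [show l + 1 + t + 1 = E + 1 by omega] at this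
  obtain ⟨j, hj⟩ := key_surj g E P (by omega) (by omega) hg1 hg2 z
  obtain ⟨n0, hn0⟩ := key_surj ((m:ℕ):ℤ_[3]) t (t + P) ht1 (by omega) hmt hmt' ((j:ℕ):ℤ_[3])
  set n := n0 + 3^P * (1 + 3^t * j) with hn
  have hperiod : (3:ℤ_[3])^(t+P) ∣ ((m:ℕ):ℤ_[3])^n - ((m:ℕ):ℤ_[3])^n0 := by
    have hfac : ((m:ℕ):ℤ_[3])^n - ((m:ℕ):ℤ_[3])^n0
        = ((m:ℕ):ℤ_[3])^n0 * (((m:ℕ):ℤ_[3])^(3^P * (1 + 3^t * j)) - 1) := by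
      rw [mul_sub, mul_one, ← pow_add, hn]
    rw [hfac]
    exact Dvd.dvd.mul_left (pow_dvd_general ht1 hmt (Dvd.intro _ rfl)) _
  have hbig : 1 + 3^t * j ≤ m^n := by
    have h1 : 1 + 3^t * j ≤ 3^P * (1 + 3^t * j) :=
      Nat.le_mul_of_pos_left _ (pow_pos (by norm_num) P)
    have h2 : 3^P * (1 + 3^t * j) ≤ n := by omega
    have h3 : n < 2^n := Nat.lt_two_pow_self
    have h4 : 2^n ≤ m^n := Nat.pow_le_pow_left hm n
    omega
  set D := m^n - (1 + 3^t * j) with hD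
  have hcast : ((D:ℕ):ℤ_[3]) = ((m:ℕ):ℤ_[3])^n - (1 + 3^t * ((j:ℕ):ℤ_[3])) := by
    rw [hD, Nat.cast_sub hbig]
    push_cast
    ring
  have hD3 : (3:ℤ_[3])^(t+P) ∣ ((D:ℕ):ℤ_[3]) := by
    rw [hcast]
    have : ((m:ℕ):ℤ_[3])^n - (1 + 3^t * ((j:ℕ):ℤ_[3]))
        = (((m:ℕ):ℤ_[3])^n - ((m:ℕ):ℤ_[3])^n0)
          + (((m:ℕ):ℤ_[3])^n0 - (1 + 3^t * ((j:ℕ):ℤ_[3]))) := by ring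
    rw [this]
    exact dvd_add hperiod hn0
  have hDnat : 3^(t+P) ∣ D := (nat_dvd _ _).mp hD3
  have hmn : m^n = 1 + 3^t * j + D := by omega
  have hfacu : u^(m^n) = u * g^j * u^D := by
    rw [hmn, pow_add, pow_add, pow_one, hg, ← pow_mul]
  have hlast : (3:ℤ_[3])^(l+1+(t+P)) ∣ u^D - 1 :=
    pow_dvd_general (by omega : 1 ≤ l+1) hu1 hDnat
  refine ⟨n, ?_⟩
  have hsplit : u^(m^n) - v = u * g^j * (u^D - 1) + u * (g^j - (1 + 3^E * z)) := by
    rw [hfacu, ← hvu]; ring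
  rw [hsplit]
  refine dvd_trans (pow_dvd_pow 3 (by omega : K ≤ P)) (dvd_add ?_ ?_)
  · exact Dvd.dvd.mul_left (dvd_trans (pow_dvd_pow 3 (by omega : P ≤ l+1+(t+P))) hlast) _
  · exact Dvd.dvd.mul_left hj _


lemma dvd_iff_norm (k : ℕ) (x : ℤ_[3]) : (3:ℤ_[3])^k ∣ x ↔ ‖x‖ ≤ (3:ℝ)^(-(k:ℤ)) := by
  have h := PadicInt.norm_le_pow_iff_mem_span_pow (p := 3) x k
  rw [Ideal.mem_span_singleton, three_cast] at h
  rw [show ((3:ℕ):ℝ) = (3:ℝ) by norm_num] at h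
  exact h.symm

lemma isClopen_ball (k : ℕ) (b : ℤ_[3]) :
    IsClopen {x : ℤ_[3] | (3:ℤ_[3])^k ∣ x - b} := by
  constructor
  · have : {x : ℤ_[3] | (3:ℤ_[3])^k ∣ x - b} = Metric.closedBall b ((3:ℝ)^(-(k:ℤ))) := by
      ext x
      rw [Metric.mem_closedBall, dist_eq_norm, Set.mem_setOf_eq, dvd_iff_norm]
    rw [this]
    exact Metric.isClosed_closedBall
  · have : {x : ℤ_[3] | (3:ℤ_[3])^k ∣ x - b} = Metric.ball b ((3:ℝ)^(-(k:ℤ)+1)) := by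
      ext x
      rw [Metric.mem_ball, dist_eq_norm, Set.mem_setOf_eq, dvd_iff_norm]
      have := PadicInt.norm_le_pow_iff_norm_lt_pow_add_one (p := 3) (x - b) (-(k:ℤ))
      rw [show ((3:ℕ):ℝ) = (3:ℝ) by norm_num] at this
      exact this
    rw [this]
    exact Metric.isOpen_ball

lemma not_dvd_nat {N : ℕ} (h : ¬ 3 ∣ N) : ¬ (3:ℤ_[3]) ∣ (N:ℤ_[3]) := by
  intro hc
  exact h (by simpa using (nat_dvd 1 N).mp (by simpa using hc))

lemma mem_ball_exact {x ε : ℤ_[3]} {t l i a : ℕ} (ht1 : 1 ≤ t) (hi : i = 1 ∨ i = 2)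
    (h : (3:ℤ_[3])^(t+l+1) ∣ x - (ε + 3^(l+1) * (i:ℤ_[3]) + 3^(l+2) * (a:ℤ_[3]))) :
    (3:ℤ_[3])^(l+1) ∣ x - ε ∧ ¬ (3:ℤ_[3])^(l+2) ∣ x - ε := by
  set c : ℤ_[3] := (i:ℤ_[3]) + 3 * (a:ℤ_[3]) with hc
  have hcen : ε + 3^(l+1) * (i:ℤ_[3]) + 3^(l+2) * (a:ℤ_[3]) = ε + 3^(l+1) * c := by
    rw [hc, pow_succ]; ring
  rw [hcen] at h
  have hcnd : ¬ (3:ℤ_[3]) ∣ c := by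
    intro hd
    have : (3:ℤ_[3]) ∣ (i:ℤ_[3]) := by
      have : (i:ℤ_[3]) = c - 3 * (a:ℤ_[3]) := by rw [hc]; ring
      rw [this]
      exact dvd_sub hd (Dvd.intro _ rfl)
    exact not_dvd_nat (by omega) this
  have hxe : x - ε = (x - (ε + 3^(l+1) * c)) + 3^(l+1) * c := by ring
  constructor
  · rw [hxe]
    exact dvd_add (dvd_trans (pow_dvd_pow 3 (by omega : l+1 ≤ t+l+1)) h) (Dvd.intro _ rfl)
  · intro hc2
    have hdc : (3:ℤ_[3])^(l+2) ∣ 3^(l+1) * c := by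
      have : (3:ℤ_[3])^(l+1) * c = (x - ε) - (x - (ε + 3^(l+1) * c)) := by ring
      rw [this]
      exact dvd_sub hc2 (dvd_trans (pow_dvd_pow 3 (by omega : l+2 ≤ t+l+1)) h)
    have : (3:ℤ_[3])^(l+1) * 3 ∣ (3:ℤ_[3])^(l+1) * c := by
      rw [← pow_succ]; exact hdc
    exact hcnd ((mul_dvd_mul_iff_left (pow_ne_zero (l+1) three_ne_zero')).mp this)


lemma resid {x : ℤ_[3]} (h : ¬ (3:ℤ_[3]) ∣ x) :
    (3:ℤ_[3]) ∣ x - 1 ∨ (3:ℤ_[3]) ∣ x + 1 := by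
  have key : (3:ℤ_[3]) ∣ x * (x - 1) * (x + 1) := by
    have h0 : PadicInt.toZMod (x * (x - 1) * (x + 1)) = 0 := by
      have hz : ∀ y : ZMod 3, y * (y - 1) * (y + 1) = 0 := by decide
      simpa using hz (PadicInt.toZMod x)
    have hmem : x * (x - 1) * (x + 1) ∈ RingHom.ker (PadicInt.toZMod (p := 3)) := h0
    rw [PadicInt.ker_toZMod, PadicInt.maximalIdeal_eq_span_p,
      Ideal.mem_span_singleton, three_cast] at hmem
    exact hmem
  have hp : Prime (3:ℤ_[3]) := by
    have := PadicInt.prime_p (p := 3); rwa [three_cast] at this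
  rcases hp.dvd_mul.mp key with hl | hr
  · rcases hp.dvd_mul.mp hl with h1 | h2
    · exact absurd h1 h
    · exact Or.inl h2
  · exact Or.inr hr

lemma cover_branch (t : ℕ) (ht1 : 1 ≤ t) {x ε : ℤ_[3]}
    (hne : x ≠ ε) (h3 : (3:ℤ_[3]) ∣ x - ε) :
    ∃ l a i : ℕ, a < 3^(t-1) ∧ (i = 1 ∨ i = 2) ∧
      (3:ℤ_[3])^(t+l+1) ∣ x - (ε + 3^(l+1) * (i:ℤ_[3]) + 3^(l+2) * (a:ℤ_[3])) := by
  set w := x - ε with hwdef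
  have hw0 : w ≠ 0 := sub_ne_zero.mpr hne
  set V := w.valuation with hV
  have hspec : w = (PadicInt.unitCoeff hw0 : ℤ_[3]) * 3^V := by
    have := PadicInt.unitCoeff_spec hw0
    rwa [three_cast] at this
  set c : ℤ_[3] := (PadicInt.unitCoeff hw0 : ℤ_[3]) with hcdef
  have hcu : IsUnit c := Units.isUnit _
  have hcnd : ¬ (3:ℤ_[3]) ∣ c := (isUnit_iff_not_dvd c).mp hcu
  have hV1 : 1 ≤ V := by
    by_contra hcon
    have hV0 : V = 0 := by omega
    rw [hV0, pow_zero, mul_one] at hspec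
    exact (isUnit_iff_not_dvd w).mp (hspec ▸ hcu) h3
  set l := V - 1 with hl
  have hwc : w = c * 3^(l+1) := by rw [hspec, show l + 1 = V by omega]
  set N := c.appr t with hN
  have hNd : (3:ℤ_[3])^t ∣ c - (N:ℤ_[3]) := appr_dvd t c
  have hNlt : N < 3^t := by
    have := PadicInt.appr_lt c t
    simpa using this
  have hN3 : ¬ 3 ∣ N := by
    intro hd
    apply hcnd
    have h1 : (3:ℤ_[3]) ∣ (N:ℤ_[3]) := by
      have := (nat_dvd 1 N).mpr (by simpa using hd)
      simpa using this
    have h2 : (3:ℤ_[3]) ∣ c - (N:ℤ_[3]) :=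
      dvd_trans (by simpa using pow_dvd_pow (3:ℤ_[3]) ht1) hNd
    have : c = (c - (N:ℤ_[3])) + (N:ℤ_[3]) := by ring
    rw [this]
    exact dvd_add h2 h1
  refine ⟨l, N / 3, N % 3, ?_, by omega, ?_⟩
  · have h3t : (3:ℕ)^(t-1) * 3 = 3^t := by
      rw [← pow_succ, Nat.sub_add_cancel ht1]
    omega
  · have hcast : ((N % 3 : ℕ):ℤ_[3]) + 3 * ((N / 3 : ℕ):ℤ_[3]) = (N:ℤ_[3]) := by
      have : N % 3 + 3 * (N / 3) = N := by omega
      exact_mod_cast congrArg (Nat.cast : ℕ → ℤ_[3]) this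
    have heq : x - (ε + 3^(l+1) * ((N % 3 : ℕ):ℤ_[3]) + 3^(l+2) * ((N / 3 : ℕ):ℤ_[3]))
        = 3^(l+1) * (c - (N:ℤ_[3])) := by
      have hx : x = ε + c * 3^(l+1) := by rw [← hwc, hwdef]; ring
      rw [hx, ← hcast, pow_succ]
      ring
    rw [heq, show t + l + 1 = (l+1) + t by omega, pow_add]
    exact mul_dvd_mul_left _ hNd

end MonoAux

open MonoAux in
/-- Minimal decomposition for `x ↦ x^m` on `ℤ_3` with `m ≡ 1 (mod 6)`:
the sets `M_{l,a,i,ε} = ε + 3^(l+1)i + 3^(l+2)a + 3^(t+l+1)ℤ_3` are pairwise disjoint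
clopen minimal components, and together with `{1, -1}` they cover exactly the 3-adic
units. -/
theorem monomial_Z3_one_mod_six_decomposition (m : ℕ) (hm : 2 ≤ m) (hmod : m % 6 = 1)
    (t : ℕ) (ht : t = padicValNat 3 (m - 1))
    (M : ℕ → ℕ → ℕ → ℤ_[3] → Set ℤ_[3])
    (hM : ∀ l a i ε, M l a i ε =
      {x : ℤ_[3] | (3 : ℤ_[3]) ^ (t + l + 1) ∣
        x - (ε + 3 ^ (l + 1) * (i : ℤ_[3]) + 3 ^ (l + 2) * (a : ℤ_[3]))}) :
    (∀ l a i (ε : ℤ_[3]) l' a' i' (ε' : ℤ_[3]),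
      a < 3 ^ (t - 1) → a' < 3 ^ (t - 1) → (i = 1 ∨ i = 2) → (i' = 1 ∨ i' = 2) →
      (ε = 1 ∨ ε = -1) → (ε' = 1 ∨ ε' = -1) →
      (l, a, i, ε) ≠ (l', a', i', ε') → Disjoint (M l a i ε) (M l' a' i' ε')) ∧
    (∀ l a i (ε : ℤ_[3]), a < 3 ^ (t - 1) → (i = 1 ∨ i = 2) → (ε = 1 ∨ ε = -1) →
      IsClopen (M l a i ε) ∧
      (∀ x ∈ M l a i ε, x ^ m ∈ M l a i ε) ∧
      (∀ x ∈ M l a i ε, M l a i ε ⊆ closure (Set.range fun n : ℕ => x ^ m ^ n))) ∧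
    ((⋃ l : ℕ, ⋃ a ∈ Finset.range (3 ^ (t - 1)), ⋃ i ∈ ({1, 2} : Set ℕ),
        ⋃ ε ∈ ({1, -1} : Set ℤ_[3]), M l a i ε)
        ∪ {1, -1} = {x : ℤ_[3] | ¬ (3 : ℤ_[3]) ∣ x}) := by
  -- basic numeric facts
  have hm7 : 7 ≤ m := by omega
  have hne : m - 1 ≠ 0 := by omega
  have h3dvd : 3 ∣ m - 1 := by omega
  have ht1 : 1 ≤ t := by
    rw [ht]
    exact (padicValNat_dvd_iff_le hne).mp (by simpa using h3dvd)
  have hm1nat : 3 ^ t ∣ m - 1 := by rw [ht]; exact pow_padicValNat_dvd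
  have hm2nat : ¬ 3 ^ (t + 1) ∣ m - 1 := by rw [ht]; exact pow_succ_padicValNat_not_dvd hne
  have hmcast : ((m:ℕ):ℤ_[3]) - 1 = ((m - 1 : ℕ) : ℤ_[3]) := by
    have h1m : 1 ≤ m := by omega
    rw [Nat.cast_sub h1m]
    push_cast
    ring
  have hmt : (3:ℤ_[3])^t ∣ ((m:ℕ):ℤ_[3]) - 1 := by
    rw [hmcast]; exact (nat_dvd t (m-1)).mpr hm1nat
  have hmt' : ¬ (3:ℤ_[3])^(t+1) ∣ ((m:ℕ):ℤ_[3]) - 1 := by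
    rw [hmcast]; exact fun hc => hm2nat ((nat_dvd (t+1) (m-1)).mp hc)
  have hmodd : Odd m := Nat.odd_iff.mpr (by omega)
  refine ⟨?_, ?_, ?_⟩
  · -- disjointness
    intro l a i ε l' a' i' ε' ha ha' hi hi' hε hε' hnetup
    rw [Set.disjoint_left]
    intro x hx hx'
    rw [hM, Set.mem_setOf_eq] at hx hx'
    have h1 := mem_ball_exact ht1 hi hx
    have h1' := mem_ball_exact ht1 hi' hx'
    have h3e : (3:ℤ_[3]) ∣ ε - ε' := by
      have d1 : (3:ℤ_[3]) ∣ x - ε :=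
        dvd_trans (by simpa using pow_dvd_pow (3:ℤ_[3]) (by omega : 1 ≤ l+1)) h1.1
      have d2 : (3:ℤ_[3]) ∣ x - ε' :=
        dvd_trans (by simpa using pow_dvd_pow (3:ℤ_[3]) (by omega : 1 ≤ l'+1)) h1'.1
      have : ε - ε' = (x - ε') - (x - ε) := by ring
      rw [this]; exact dvd_sub d2 d1
    have hεeq : ε = ε' := by
      rcases hε with rfl | rfl <;> rcases hε' with rfl | rfl
      · rfl
      · exfalso
        apply not_dvd_two
        have h2 : (1:ℤ_[3]) - (-1) = 2 := by norm_num
        rwa [h2] at h3e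
      · exfalso
        apply not_dvd_two
        have h2 : (-1:ℤ_[3]) - 1 = -2 := by norm_num
        rw [h2] at h3e
        exact dvd_neg.mp h3e
      · rfl
    subst hεeq
    have hleq : l = l' := by
      by_contra hll
      rcases Nat.lt_or_ge l l' with hlt | hge
      · exact h1.2 (dvd_trans (pow_dvd_pow 3 (by omega : l+2 ≤ l'+1)) h1'.1)
      · have hlt' : l' < l := by omega
        exact h1'.2 (dvd_trans (pow_dvd_pow 3 (by omega : l'+2 ≤ l+1)) h1.1)
    subst hleq
    -- same modulus; compare centers
    set N : ℕ := i + 3 * a with hNdef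
    set N' : ℕ := i' + 3 * a' with hN'def
    have hcent : (3:ℤ_[3])^(t+l+1) ∣ 3^(l+1) * ((N:ℤ_[3]) - (N':ℤ_[3])) := by
      have hb : (3:ℤ_[3])^(l+1) * ((N:ℤ_[3]) - (N':ℤ_[3])) =
          (x - (ε + 3 ^ (l + 1) * (i':ℤ_[3]) + 3 ^ (l + 2) * (a':ℤ_[3])))
          - (x - (ε + 3 ^ (l + 1) * (i:ℤ_[3]) + 3 ^ (l + 2) * (a:ℤ_[3]))) := by
        rw [hNdef, hN'def]
        push_cast
        rw [pow_succ]
        ring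
      rw [hb]
      exact dvd_sub hx' hx
    have hNd3 : (3:ℤ_[3])^t ∣ (N:ℤ_[3]) - (N':ℤ_[3]) := by
      have : (3:ℤ_[3])^(l+1) * 3^t ∣ (3:ℤ_[3])^(l+1) * ((N:ℤ_[3]) - (N':ℤ_[3])) := by
        rw [← pow_add, show l + 1 + t = t + l + 1 by omega]
        exact hcent
      exact (mul_dvd_mul_iff_left (pow_ne_zero (l+1) three_ne_zero')).mp this
    have hint : (3:ℤ)^t ∣ (N:ℤ) - (N':ℤ) := by
      rw [← int_dvd]
      have : (((N:ℤ) - (N':ℤ) : ℤ) : ℤ_[3]) = (N:ℤ_[3]) - (N':ℤ_[3]) := by push_cast; ring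
      rw [this]
      exact hNd3
    have h3t : (3:ℕ)^(t-1) * 3 = 3^t := by
      rw [← pow_succ, Nat.sub_add_cancel ht1]
    have hNlt : N < 3^t := by omega
    have hN'lt : N' < 3^t := by omega
    have hNN' : N = N' := by
      have hz : (N:ℤ) - (N':ℤ) = 0 := by
        have hd' : ((3^t : ℕ) : ℤ) ∣ (N:ℤ) - (N':ℤ) := by
          have hc : ((3:ℤ))^t = ((3^t : ℕ) : ℤ) := by push_cast; ring
          rw [← hc]; exact hint
        refine Int.eq_zero_of_abs_lt_dvd hd' ?_
        · rw [abs_lt]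
          constructor
          · have : ((N':ℕ):ℤ) < ((3^t : ℕ):ℤ) := by exact_mod_cast hN'lt
            push_cast at this ⊢
            omega
          · have : ((N:ℕ):ℤ) < ((3^t : ℕ):ℤ) := by exact_mod_cast hNlt
            push_cast at this ⊢
            omega
      omega
    have hii : i = i' := by omega
    have haa : a = a' := by omega
    subst hii; subst haa
    exact hnetup rfl
  · -- clopen, invariance, minimality
    intro l a i ε ha hi hε
    have hε2 : ε * ε = 1 := by rcases hε with rfl | rfl <;> norm_num
    refine ⟨?_, ?_, ?_⟩
    · rw [hM]
      exact isClopen_ball (t+l+1) _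
    · -- invariance
      intro x hx
      rw [hM, Set.mem_setOf_eq] at hx ⊢
      have hxe := mem_ball_exact ht1 hi hx
      set u : ℤ_[3] := ε * x with hu
      have hu1 : (3:ℤ_[3])^(l+1) ∣ u - 1 := by
        have heq : u - 1 = ε * (x - ε) := by rw [hu]; linear_combination hε2
        rw [heq]
        exact Dvd.dvd.mul_left hxe.1 ε
      have hεe : ε ^ (m - 1) = 1 := by
        rcases hε with rfl | rfl
        · rw [one_pow]
        · exact Even.neg_one_pow (Nat.Odd.sub_odd hmodd odd_one)
      have hxpow : u ^ (m-1) = x ^ (m-1) := by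
        rw [hu, mul_pow, hεe, one_mul]
      have hdvdu : (3:ℤ_[3])^(t+l+1) ∣ u^(m-1) - 1 := by
        have := pow_dvd_general (by omega : 1 ≤ l+1) hu1 (s := t) (k := m - 1) hm1nat
        rwa [show l + 1 + t = t + l + 1 by omega] at this
      have hxm : x ^ m = u^(m-1) * x := by
        conv_lhs => rw [show m = (m-1)+1 by omega]
        rw [pow_succ, hxpow]
      have hsplit : x ^ m - (ε + 3 ^ (l + 1) * (i:ℤ_[3]) + 3 ^ (l + 2) * (a:ℤ_[3]))
          = x * (u^(m-1) - 1) +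
            (x - (ε + 3 ^ (l + 1) * (i:ℤ_[3]) + 3 ^ (l + 2) * (a:ℤ_[3]))) := by
        linear_combination hxm
      rw [hsplit]
      exact dvd_add (Dvd.dvd.mul_left hdvdu x) hx
    · -- minimality
      intro x hx y hy
      rw [hM, Set.mem_setOf_eq] at hx hy
      have hxe := mem_ball_exact ht1 hi hx
      set u : ℤ_[3] := ε * x with hu
      set v : ℤ_[3] := ε * y with hv
      have hu1 : (3:ℤ_[3])^(l+1) ∣ u - 1 := by
        have heq : u - 1 = ε * (x - ε) := by rw [hu]; linear_combination hε2
        rw [heq]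
        exact Dvd.dvd.mul_left hxe.1 ε
      have hu2 : ¬ (3:ℤ_[3])^(l+2) ∣ u - 1 := by
        intro hc
        apply hxe.2
        have heq : x - ε = ε * (u - 1) := by rw [hu]; linear_combination (-x) * hε2
        rw [heq]
        exact Dvd.dvd.mul_left hc ε
      have huv : (3:ℤ_[3])^(t+l+1) ∣ v - u := by
        have heq : v - u = ε * ((y - (ε + 3 ^ (l + 1) * (i:ℤ_[3]) + 3 ^ (l + 2) * (a:ℤ_[3])))
            - (x - (ε + 3 ^ (l + 1) * (i:ℤ_[3]) + 3 ^ (l + 2) * (a:ℤ_[3])))) := by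
          rw [hu, hv]; ring
        rw [heq]
        exact Dvd.dvd.mul_left (dvd_sub hy hx) ε
      rw [Metric.mem_closure_iff]
      intro δ hδ
      obtain ⟨K, hK⟩ := PadicInt.exists_pow_neg_lt 3 hδ
      obtain ⟨n, hn⟩ := exists_orbit_approx m t hm ht1 hmt hmt' hu1 hu2 huv K
      refine ⟨x ^ m ^ n, ⟨n, rfl⟩, ?_⟩
      have hεmn : ε ^ (m ^ n) = ε := by
        rcases hε with rfl | rfl
        · rw [one_pow]
        · exact Odd.neg_one_pow (hmodd.pow)
      have hxn : x ^ (m ^ n) = ε * u^(m^n) := by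
        have hxu : x = ε * u := by rw [hu]; linear_combination (-x) * hε2
        calc x ^ (m^n) = (ε * u)^(m^n) := by rw [← hxu]
          _ = ε^(m^n) * u^(m^n) := mul_pow _ _ _
          _ = ε * u^(m^n) := by rw [hεmn]
      have hdiff : x ^ (m^n) - y = ε * (u^(m^n) - v) := by
        rw [hxn, hv]
        linear_combination y * hε2
      have hdvd : (3:ℤ_[3])^K ∣ x ^ (m^n) - y := by
        rw [hdiff]
        exact Dvd.dvd.mul_left hn ε
      have hnorm : ‖x ^ (m^n) - y‖ ≤ (3:ℝ)^(-(K:ℤ)) := (dvd_iff_norm K _).mp hdvd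
      rw [dist_eq_norm, norm_sub_rev]
      calc ‖x ^ (m^n) - y‖ ≤ (3:ℝ)^(-(K:ℤ)) := hnorm
        _ < δ := by
          rw [show ((3:ℕ):ℝ) = (3:ℝ) by norm_num] at hK
          exact hK
  · -- coverage
    ext x
    simp only [Set.mem_union, Set.mem_setOf_eq, Set.mem_iUnion, Finset.mem_range,
      Set.mem_insert_iff, Set.mem_singleton_iff, exists_prop]
    constructor
    · rintro (⟨l, a, ha, i, hi, ε, hε, hmem⟩ | hx)
      · rw [hM, Set.mem_setOf_eq] at hmem
        intro hdx
        have hε2 : ε * ε = 1 := by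
          rcases hε with rfl | rfl <;> norm_num
        apply not_dvd_one
        have hdb : (3:ℤ_[3]) ∣ ε := by
          have h1 : (3:ℤ_[3]) ∣ x - (ε + 3 ^ (l + 1) * (i:ℤ_[3]) + 3 ^ (l + 2) * (a:ℤ_[3])) :=
            dvd_trans (by simpa using pow_dvd_pow (3:ℤ_[3]) (by omega : 1 ≤ t+l+1)) hmem
          have heq : ε = x - (x - (ε + 3 ^ (l + 1) * (i:ℤ_[3]) + 3 ^ (l + 2) * (a:ℤ_[3])))
              - 3^l * 3 * (i:ℤ_[3]) - 3^(l+1) * 3 * (a:ℤ_[3]) := by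
            rw [pow_succ, pow_succ, pow_succ]
            ring
          rw [heq]
          refine dvd_sub (dvd_sub (dvd_sub hdx h1) ?_) ?_
          · exact Dvd.dvd.mul_right (Dvd.dvd.mul_left dvd_rfl _) _
          · exact Dvd.dvd.mul_right (Dvd.dvd.mul_left dvd_rfl _) _
        have : (3:ℤ_[3]) ∣ ε * ε := Dvd.dvd.mul_right hdb ε
        rwa [hε2] at this
      · intro hdx
        apply not_dvd_one
        rcases hx with rfl | rfl
        · exact hdx
        · exact dvd_neg.mp hdx
    · intro hx
      rcases resid hx with h1 | h2
      · by_cases hx1 : x = 1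
        · exact Or.inr (Or.inl hx1)
        · left
          obtain ⟨l, a, i, ha, hi, hd⟩ := cover_branch t ht1 hx1 h1
          exact ⟨l, a, ha, i, hi, 1, Or.inl rfl, by rw [hM]; exact hd⟩
      · by_cases hx1 : x = -1
        · exact Or.inr (Or.inr hx1)
        · left
          have h3 : (3:ℤ_[3]) ∣ x - (-1) := by rwa [sub_neg_eq_add]
          obtain ⟨l, a, i, ha, hi, hd⟩ := cover_branch t ht1 hx1 h3
          exact ⟨l, a, ha, i, hi, -1, Or.inr rfl, by rw [hM]; exact hd⟩
end

section
/- Let m ≥ 2 be an integer with m ≡ 4 (mod 6), let f(x) = x^m on ℤ_3, and let t = ν_3(m − 1). For each integer l ≥ 0, each i ∈ {1, 2}, and each a ∈ {0, 1, …, 3^(t−1) − 1}, set M_{l,a,i} = 1 + 3^(l+1)·i + 3^(l+2)·a + 3^(t+l+1)ℤ_3. Then the sets M_{l,a,i} are pairwise disjoint clopen subsets of ℤ_3, each M_{l,a,i} is a minimal component of f (f(M_{l,a,i}) ⊆ M_{l,a,i} and every forward orbit of f in M_{l,a,i} is dense in M_{l,a,i}), the union of all the M_{l,a,i} together with {1}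 equals the ball 1 + 3ℤ_3, and moreover f maps the ball 2 + 3ℤ_3 into 1 + 3ℤ_3. -/
open Filter Topology



open PadicInt

namespace MZ3Aux

lemma p3 : Prime (3 : ℤ_[3]) := by
  have := PadicInt.prime_p (p := 3)
  simpa using this

lemma intdvd (s : ℕ) (k : ℤ) : (3:ℤ_[3])^s ∣ (k : ℤ_[3]) ↔ (3:ℤ)^s ∣ k := by
  have h := PadicInt.pow_p_dvd_int_iff (p := 3) s k
  have h3 : ((3:ℕ) : ℤ_[3]) = (3 : ℤ_[3]) := by norm_cast
  rw [h3] at h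
  rw [h]
  norm_cast

lemma natdvd (s k : ℕ) : (3:ℤ_[3])^s ∣ (k : ℤ_[3]) ↔ 3^s ∣ k := by
  have : ((k:ℤ) : ℤ_[3]) = (k : ℤ_[3]) := by push_cast; ring
  rw [← this, intdvd]
  norm_cast

lemma geom (z v : ℤ_[3]) (h : z ∣ v - 1) : ∀ e : ℕ, z ∣ v ^ e - 1 := by
  intro e
  induction e with
  | zero => simp
  | succ e ih =>
    have : v ^ (e+1) - 1 = v * (v ^ e - 1) + (v - 1) := by ring
    rw [this]
    exact dvd_add (ih.mul_left v) h

lemma lemIter (s : ℕ) (hs : 1 ≤ s) (x : ℤ_[3]) (hx : (3:ℤ_[3])^s ∣ x - 1) :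
    ∀ r : ℕ, (3:ℤ_[3])^(s+r) ∣ x ^ (3^r) - 1 := by
  intro r
  induction r with
  | zero => simpa using hx
  | succ r ih =>
    set w := x ^ (3^r) with hw
    have hw1 : (3:ℤ_[3]) ∣ w - 1 :=
      dvd_trans (dvd_pow_self (3:ℤ_[3]) (by omega : s + r ≠ 0)) ih
    have h2 : (3:ℤ_[3]) ∣ w^2 + w + 1 := by
      have : w^2 + w + 1 = (w - 1) * (w + 2) + 3 := by ring
      rw [this]
      exact dvd_add (hw1.mul_right _) dvd_rfl
    have hcube : x ^ (3^(r+1)) = w^3 := by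
      rw [hw, ← pow_mul, ← pow_succ]
    have key : x ^ (3^(r+1)) - 1 = (w - 1) * (w^2 + w + 1) := by
      rw [hcube]; ring
    rw [key, show s + (r+1) = (s+r) + 1 by omega, pow_succ]
    exact mul_dvd_mul ih h2

lemma lemD (s r : ℕ) (hs : 1 ≤ s) (x : ℤ_[3]) (hx : (3:ℤ_[3])^s ∣ x - 1)
    (D : ℕ) (hD : 3^r ∣ D) : (3:ℤ_[3])^(s+r) ∣ x ^ D - 1 := by
  obtain ⟨e, rfl⟩ := hD
  rw [pow_mul]
  exact geom _ _ (lemIter s hs x hx r) e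

lemma lemC (k : ℕ) (x : ℤ_[3]) (hx : (3:ℤ_[3]) ∣ x - 1) (D : ℕ) (hD : 3^k ∣ D) :
    (3:ℤ_[3])^k ∣ x ^ D - 1 := by
  have := lemD 1 k le_rfl x (by simpa using hx) D hD
  exact dvd_trans (pow_dvd_pow 3 (by omega)) this

lemma stepExact (s : ℕ) (hs : 1 ≤ s) (u : ℤ_[3]) (h1 : (3:ℤ_[3])^s ∣ u - 1)
    (h2 : ¬ (3:ℤ_[3])^(s+1) ∣ u - 1) :
    (3:ℤ_[3])^(s+1) ∣ u^3 - 1 ∧ ¬ (3:ℤ_[3])^(s+2) ∣ u^3 - 1 := by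
  obtain ⟨v, hv⟩ := h1
  have hv3 : ¬ (3:ℤ_[3]) ∣ v := by
    rintro ⟨w, hw⟩
    exact h2 ⟨w, by rw [hv, hw]; ring⟩
  obtain ⟨S, rfl⟩ : ∃ S, s = S + 1 := ⟨s - 1, by omega⟩
  have hu : u = 1 + 3^(S+1) * v := by linear_combination hv
  have key : u^3 - 1 = 3^(S+1+1) * (v + 3^(S+1) * v^2 + 3^(2*S+1) * v^3) := by
    rw [hu]; ring
  constructor
  · exact ⟨_, key⟩
  · rintro ⟨w, hw⟩
    apply hv3
    have hne : (3:ℤ_[3])^(S+2) ≠ 0 := pow_ne_zero _ p3.ne_zero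
    have : v + 3^(S+1) * v^2 + 3^(2*S+1) * v^3 = 3 * w := by
      apply mul_left_cancel₀ hne
      rw [show (3:ℤ_[3])^(S+2) * (3*w) = 3^(S+1+2) * w by ring]
      rw [← hw, key]
    exact ⟨w - 3^S * v^2 - 3^(2*S) * v^3, by linear_combination this⟩

lemma exactIter (s : ℕ) (hs : 1 ≤ s) (u : ℤ_[3]) (h1 : (3:ℤ_[3])^s ∣ u - 1)
    (h2 : ¬ (3:ℤ_[3])^(s+1) ∣ u - 1) :
    ∀ r : ℕ, (3:ℤ_[3])^(s+r) ∣ u ^ (3^r) - 1 ∧ ¬ (3:ℤ_[3])^(s+r+1) ∣ u ^ (3^r) - 1 := by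
  intro r
  induction r with
  | zero => simpa using ⟨h1, h2⟩
  | succ r ih =>
    have := stepExact (s+r) (by omega) (u ^ (3^r)) ih.1 ih.2
    rw [← pow_mul, ← pow_succ] at this
    exact ⟨by rw [show s+(r+1) = s+r+1 by omega]; exact this.1,
           by rw [show s+(r+1)+1 = s+r+2 by omega]; exact this.2⟩

lemma dvd3_iff (z : ℤ_[3]) : (3:ℤ_[3]) ∣ z ↔ PadicInt.toZMod z = 0 := by
  rw [show ((3:ℤ_[3]) ∣ z) ↔ z ∈ Ideal.span {(3:ℤ_[3])} from (Ideal.mem_span_singleton).symm]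
  have h1 : Ideal.span {(3:ℤ_[3])} = IsLocalRing.maximalIdeal ℤ_[3] := by
    rw [PadicInt.maximalIdeal_eq_span_p]
    norm_num
  rw [h1, ← PadicInt.ker_toZMod, RingHom.mem_ker]

lemma choose_c (d w : ℤ_[3]) (hw : ¬ (3:ℤ_[3]) ∣ w) :
    ∃ c : ℕ, (3:ℤ_[3]) ∣ w * (c:ℤ_[3]) + d := by
  have hw0 : PadicInt.toZMod w ≠ 0 := fun h => hw ((dvd3_iff w).mpr h)
  refine ⟨((- PadicInt.toZMod d) * (PadicInt.toZMod w)⁻¹).val, ?_⟩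
  rw [dvd3_iff]
  rw [map_add, map_mul, map_natCast]
  rw [ZMod.natCast_rightInverse _]
  field_simp
  ring


lemma lemH (k : ℕ) (hk : 1 ≤ k) (u h : ℤ_[3]) (hh : h = 1 + 3^k * u) (c : ℕ) :
    ∃ r : ℤ_[3], h ^ c = 1 + 3^k * ((c:ℤ_[3]) * u) + 3^(k+1) * r := by
  induction c with
  | zero => exact ⟨0, by simp⟩
  | succ c ih =>
    obtain ⟨r, hr⟩ := ih
    obtain ⟨K, rfl⟩ : ∃ K, k = K + 1 := ⟨k - 1, by omega⟩
    refine ⟨r + u * ((c:ℤ_[3]) * u) * 3^K + 3^(K+1) * (u * r), ?_⟩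
    rw [pow_succ, hr, hh]
    push_cast
    ring

lemma cyc (T : ℕ) (hT : 1 ≤ T) (g x y : ℤ_[3])
    (hg1 : (3:ℤ_[3])^T ∣ g - 1) (hg2 : ¬ (3:ℤ_[3])^(T+1) ∣ g - 1)
    (hy : ¬ (3:ℤ_[3]) ∣ y) (hxy : (3:ℤ_[3])^T ∣ x - y) :
    ∀ k, T ≤ k → ∃ j : ℕ, (3:ℤ_[3])^k ∣ x * g ^ j - y := by
  intro k hk
  induction k, hk using Nat.le_induction with
  | base => exact ⟨0, by simpa using hxy⟩
  | succ k hk IH =>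
    obtain ⟨j, d, hd⟩ := IH
    have hexact := exactIter T hT g hg1 hg2 (k - T)
    rw [show T + (k - T) = k by omega] at hexact
    obtain ⟨u, hu⟩ := hexact.1
    have hu3 : ¬ (3:ℤ_[3]) ∣ u := by
      rintro ⟨w, hw⟩
      exact hexact.2 ⟨w, by rw [hu, hw]; ring⟩
    have hyu : ¬ (3:ℤ_[3]) ∣ y * u := by
      intro h
      rcases (p3.dvd_mul).mp h with h | h
      exacts [hy h, hu3 h]
    obtain ⟨c, hc⟩ := choose_c d (y * u) hyu
    obtain ⟨e, he⟩ := hc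
    set h := g ^ (3^(k-T)) with hhdef
    have hh : h = 1 + 3^k * u := by linear_combination hu
    obtain ⟨r, hr⟩ := lemH k (by omega) u h hh c
    refine ⟨j + 3^(k-T) * c, ?_⟩
    have e1 : x * g ^ (j + 3^(k-T) * c) = (y + 3^k * d) * h ^ c := by
      rw [pow_add, pow_mul, ← hhdef, ← mul_assoc]
      congr 1
      linear_combination hd
    obtain ⟨K, rfl⟩ : ∃ K, k = K + 1 := ⟨k - 1, by omega⟩
    refine ⟨e + y * r + 3^K * (d * ((c:ℤ_[3]) * u)) + 3^(K+1) * (d * r), ?_⟩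
    rw [e1, hr]
    linear_combination (3:ℤ_[3])^(K+1) * he


lemma dvd_iff_norm_le (s : ℕ) (z : ℤ_[3]) :
    (3:ℤ_[3])^s ∣ z ↔ ‖z‖ ≤ (1/3:ℝ)^s := by
  have h := PadicInt.norm_le_pow_iff_mem_span_pow (p := 3) z s
  rw [Ideal.mem_span_singleton] at h
  have c1 : (((3:ℕ)):ℤ_[3]) = 3 := by norm_cast
  rw [c1] at h
  rw [← h]
  have c2 : (((3:ℕ)):ℝ)^(-(s:ℤ)) = (1/3:ℝ)^s := by
    push_cast
    rw [zpow_neg, zpow_natCast, one_div, inv_pow]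
  rw [c2]

lemma memVal (t l i a : ℕ) (ht : 1 ≤ t) (hi : i = 1 ∨ i = 2) (x : ℤ_[3])
    (hx : (3:ℤ_[3])^(t+l+1) ∣ x - (1 + 3^(l+1) * (i:ℤ_[3]) + 3^(l+2) * (a:ℤ_[3]))) :
    (3:ℤ_[3])^(l+1) ∣ x - 1 ∧ ¬ (3:ℤ_[3])^(l+2) ∣ x - 1 := by
  set c : ℤ_[3] := 1 + 3^(l+1) * (i:ℤ_[3]) + 3^(l+2) * (a:ℤ_[3]) with hc
  have h1 : (3:ℤ_[3])^(l+1) ∣ x - c := dvd_trans (pow_dvd_pow 3 (by omega)) hx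
  have h2 : (3:ℤ_[3])^(l+2) ∣ x - c := dvd_trans (pow_dvd_pow 3 (by omega)) hx
  have hsplit : x - 1 = (x - c) + 3^(l+1) * ((i:ℤ_[3]) + 3 * a) := by rw [hc]; ring
  constructor
  · rw [hsplit]; exact dvd_add h1 ⟨(i:ℤ_[3]) + 3*a, rfl⟩
  · intro hcon
    have hdvd : (3:ℤ_[3])^(l+2) ∣ 3^(l+1) * ((i:ℤ_[3]) + 3 * a) := by
      have h3 : (3:ℤ_[3])^(l+1) * ((i:ℤ_[3]) + 3*a) = (x - 1) - (x - c) := by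
        rw [hsplit]; ring
      rw [h3]; exact dvd_sub hcon h2
    obtain ⟨w, hw⟩ := hdvd
    have hiw : (i:ℤ_[3]) + 3*a = 3 * w := by
      apply mul_left_cancel₀ (pow_ne_zero (l+1) p3.ne_zero)
      rw [hw]; ring
    have hdi : (3:ℤ_[3]) ∣ (i:ℤ_[3]) := ⟨w - a, by linear_combination hiw⟩
    rw [show (3:ℤ_[3]) = 3^1 by ring, natdvd 1 i, pow_one] at hdi
    omega

lemma density (m t l : ℕ) (hm : 2 ≤ m) (ht1 : 1 ≤ t)
    (hmt : 3^t ∣ m - 1) (hmt2 : ¬ 3^(t+1) ∣ m - 1)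
    (x y : ℤ_[3])
    (hx1 : (3:ℤ_[3])^(l+1) ∣ x - 1) (hx2 : ¬ (3:ℤ_[3])^(l+2) ∣ x - 1)
    (hy3 : (3:ℤ_[3]) ∣ y - 1)
    (hxy : (3:ℤ_[3])^(t+l+1) ∣ x - y) (k : ℕ) (hk : t+l+1 ≤ k) :
    ∃ n : ℕ, (3:ℤ_[3])^k ∣ x ^ m ^ n - y := by
  have hx3 : (3:ℤ_[3]) ∣ x - 1 := dvd_trans (dvd_pow_self 3 (by omega : l+1 ≠ 0)) hx1
  have hyu : ¬ (3:ℤ_[3]) ∣ y := by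
    intro h
    exact p3.not_dvd_one (by have h2 := dvd_sub h hy3; simpa using h2)
  have hg := exactIter (l+1) (by omega) x hx1 hx2 t
  rw [show l+1+t = t+l+1 by omega] at hg
  obtain ⟨j, hj⟩ := cyc (t+l+1) (by omega) (x ^ (3^t)) x y hg.1 hg.2 hyu hxy k hk
  have hmcast : ((m:ℤ_[3]) - 1) = ((m - 1 : ℕ) : ℤ_[3]) := by
    have : ((m - 1 : ℕ) : ℤ_[3]) = (m:ℤ_[3]) - 1 := by
      push_cast [Nat.cast_sub (by omega : 1 ≤ m)]; ring
    rw [this]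
  have hm1 : (3:ℤ_[3])^t ∣ (m:ℤ_[3]) - 1 := by rw [hmcast, natdvd]; exact hmt
  have hm2 : ¬ (3:ℤ_[3])^(t+1) ∣ (m:ℤ_[3]) - 1 := by rw [hmcast, natdvd]; exact hmt2
  set B : ℕ := 1 + 3^t * j with hB
  have hBcast : ((B:ℕ):ℤ_[3]) = 1 + 3^t * (j:ℤ_[3]) := by rw [hB]; push_cast; ring
  have hwB : ¬ (3:ℤ_[3]) ∣ (B:ℤ_[3]) := by
    intro hdv
    apply p3.not_dvd_one
    have h2 : (3:ℤ_[3]) ∣ (3:ℤ_[3])^t * j :=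
      Dvd.dvd.mul_right (dvd_pow_self 3 (by omega : t ≠ 0)) _
    have h3 : (1:ℤ_[3]) = (B:ℤ_[3]) - 3^t * j := by rw [hBcast]; ring
    rw [h3]; exact dvd_sub hdv h2
  have h1B : (3:ℤ_[3])^t ∣ 1 - (B:ℤ_[3]) := ⟨-(j:ℤ_[3]), by rw [hBcast]; ring⟩
  obtain ⟨n, hn⟩ := cyc t ht1 (m:ℤ_[3]) 1 (B:ℤ_[3]) hm1 hm2 hwB h1B k (by omega)
  rw [one_mul] at hn
  set A : ℕ := m^n with hA
  have hAB : (3:ℤ)^k ∣ (A:ℤ) - B := by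
    rw [← intdvd]
    have hcast : (((A:ℤ) - B : ℤ) : ℤ_[3]) = (m:ℤ_[3])^n - B := by
      push_cast [hA]; ring
    rw [hcast]; exact hn
  have hxab : (3:ℤ_[3])^k ∣ x ^ A - x ^ B := by
    rcases le_total B A with hle | hle
    · have hD : 3^k ∣ A - B := by
        have h0 : ((A - B : ℕ) : ℤ) = (A:ℤ) - B := by omega
        have h2 : ((3:ℤ))^k ∣ ((A - B : ℕ):ℤ) := by rw [h0]; exact hAB
        exact_mod_cast h2
      have hfac : x ^ A - x ^ B = x ^ B * (x ^ (A - B) - 1) := by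
        rw [mul_sub, mul_one, ← pow_add, show B + (A - B) = A by omega]
      rw [hfac]
      exact (lemC k x hx3 (A-B) hD).mul_left _
    · have hD : 3^k ∣ B - A := by
        have h0 : ((B - A : ℕ) : ℤ) = (B:ℤ) - A := by omega
        have h2 : ((3:ℤ))^k ∣ ((B - A : ℕ):ℤ) := by
          rw [h0]
          have := dvd_neg.mpr hAB
          rwa [neg_sub] at this
        exact_mod_cast h2
      have hfac : x ^ A - x ^ B = -(x ^ A * (x ^ (B - A) - 1)) := by
        rw [mul_sub, mul_one, ← pow_add, show A + (B - A) = B by omega]; ring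
      rw [hfac]
      exact dvd_neg.mpr ((lemC k x hx3 (B-A) hD).mul_left _)
  have hxB : x ^ B = x * (x ^ (3^t)) ^ j := by
    rw [hB, pow_add, pow_mul, pow_one]
  refine ⟨n, ?_⟩
  have hfin : x ^ m ^ n - y = (x ^ A - x ^ B) + (x * (x ^ (3^t)) ^ j - y) := by
    rw [hxB, ← hA]; ring
  rw [hfin]
  exact dvd_add hxab hj

end MZ3Aux


open MZ3Aux in
/-- Minimal decomposition for `x ↦ x^m` on `ℤ_3` with `m ≡ 4 (mod 6)`:
the sets `M_{l,a,i} = 1 + 3^(l+1)i + 3^(l+2)a + 3^(t+l+1)ℤ_3` are pairwise disjoint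
clopen minimal components, together with `{1}` they cover exactly the ball `1 + 3ℤ_3`,
and `f` maps `2 + 3ℤ_3` into `1 + 3ℤ_3`. -/
theorem monomial_Z3_four_mod_six_decomposition (m : ℕ) (hm : 2 ≤ m) (hmod : m % 6 = 4)
    (t : ℕ) (ht : t = padicValNat 3 (m - 1))
    (M : ℕ → ℕ → ℕ → Set ℤ_[3])
    (hM : ∀ l a i, M l a i =
      {x : ℤ_[3] | (3 : ℤ_[3]) ^ (t + l + 1) ∣
        x - (1 + 3 ^ (l + 1) * (i : ℤ_[3]) + 3 ^ (l + 2) * (a : ℤ_[3]))}) :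
    (∀ l a i l' a' i',
      a < 3 ^ (t - 1) → a' < 3 ^ (t - 1) → (i = 1 ∨ i = 2) → (i' = 1 ∨ i' = 2) →
      (l, a, i) ≠ (l', a', i') → Disjoint (M l a i) (M l' a' i')) ∧
    (∀ l a i, a < 3 ^ (t - 1) → (i = 1 ∨ i = 2) →
      IsClopen (M l a i) ∧
      (∀ x ∈ M l a i, x ^ m ∈ M l a i) ∧
      (∀ x ∈ M l a i, M l a i ⊆ closure (Set.range fun n : ℕ => x ^ m ^ n))) ∧
    ((⋃ l : ℕ, ⋃ a ∈ Finset.range (3 ^ (t - 1)), ⋃ i ∈ ({1, 2} : Set ℕ), M l a i)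
        ∪ {1} = {x : ℤ_[3] | (3 : ℤ_[3]) ∣ x - 1}) ∧
    (∀ x : ℤ_[3], (3 : ℤ_[3]) ∣ x - 2 → (3 : ℤ_[3]) ∣ x ^ m - 1) := by
  classical
  have ht1 : 1 ≤ t := by
    rw [ht]
    exact one_le_padicValNat_of_dvd (by omega) (by omega)
  have hmt : 3^t ∣ m - 1 := by rw [ht]; exact pow_padicValNat_dvd
  have hmt2 : ¬ 3^(t+1) ∣ m - 1 := by rw [ht]; exact pow_succ_padicValNat_not_dvd (by omega)
  refine ⟨?_, ?_, ?_, ?_⟩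
  · -- disjointness
    intro l a i l' a' i' ha ha' hi hi' hne
    rw [Set.disjoint_left]
    intro x hx hx'
    rw [hM] at hx hx'
    simp only [Set.mem_setOf_eq] at hx hx'
    have e1 := memVal t l i a ht1 hi x hx
    have e1' := memVal t l' i' a' ht1 hi' x hx'
    have hll : l = l' := by
      by_contra h
      rcases Nat.lt_or_ge l l' with h2 | h2
      · exact e1.2 (dvd_trans (pow_dvd_pow 3 (by omega)) e1'.1)
      · exact e1'.2 (dvd_trans (pow_dvd_pow 3 (by omega)) e1.1)
    subst hll
    have hcc : (3:ℤ_[3])^(t+l+1) ∣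
        ((1 + 3^(l+1)*(i:ℤ_[3]) + 3^(l+2)*(a:ℤ_[3])) -
         (1 + 3^(l+1)*(i':ℤ_[3]) + 3^(l+2)*(a':ℤ_[3]))) := by
      have h0 := dvd_sub hx' hx
      have h1 : (x - (1 + 3^(l+1)*(i':ℤ_[3]) + 3^(l+2)*(a':ℤ_[3]))) -
          (x - (1 + 3^(l+1)*(i:ℤ_[3]) + 3^(l+2)*(a:ℤ_[3]))) =
          (1 + 3^(l+1)*(i:ℤ_[3]) + 3^(l+2)*(a:ℤ_[3])) -
          (1 + 3^(l+1)*(i':ℤ_[3]) + 3^(l+2)*(a':ℤ_[3])) := by ring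
      rwa [h1] at h0
    set z : ℤ := ((i:ℤ) + 3*a) - ((i':ℤ) + 3*a') with hz
    have hfac : ((1 + 3^(l+1)*(i:ℤ_[3]) + 3^(l+2)*(a:ℤ_[3])) -
         (1 + 3^(l+1)*(i':ℤ_[3]) + 3^(l+2)*(a':ℤ_[3]))) = 3^(l+1) * ((z:ℤ) : ℤ_[3]) := by
      rw [hz]; push_cast; ring
    obtain ⟨w, hw⟩ := hcc
    have hcancel : ((z:ℤ):ℤ_[3]) = 3^t * w := by
      apply mul_left_cancel₀ (pow_ne_zero (l+1) p3.ne_zero)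
      linear_combination hw - hfac
    have hzd : (3:ℤ)^t ∣ z := (intdvd t z).mp ⟨w, hcancel⟩
    have hi2 : (i:ℤ) ≤ 2 := by rcases hi with h|h <;> simp [h]
    have hi1 : (1:ℤ) ≤ (i:ℤ) := by rcases hi with h|h <;> simp [h]
    have hi2' : (i':ℤ) ≤ 2 := by rcases hi' with h|h <;> simp [h]
    have hi1' : (1:ℤ) ≤ (i':ℤ) := by rcases hi' with h|h <;> simp [h]
    have hai : (a:ℤ) < 3^(t-1) := by exact_mod_cast ha
    have hai' : (a':ℤ) < 3^(t-1) := by exact_mod_cast ha'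
    have ha0 : (0:ℤ) ≤ (a:ℤ) := Int.natCast_nonneg a
    have ha0' : (0:ℤ) ≤ (a':ℤ) := Int.natCast_nonneg a'
    have h3t : (3:ℤ)^t = 3 * 3^(t-1) := by
      rw [← pow_succ']; congr 1; omega
    have hz0 : z = 0 := by
      refine Int.eq_zero_of_abs_lt_dvd hzd ?_
      rw [abs_lt]
      constructor
      · rw [h3t, hz]; linarith
      · rw [h3t, hz]; linarith
    have heq : a = a' ∧ i = i' := by omega
    exact hne (by rw [heq.1, heq.2])
  · -- clopen, invariance, minimality
    intro l a i ha hi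
    refine ⟨?_, ?_, ?_⟩
    · rw [hM]
      have hset : {x : ℤ_[3] | (3:ℤ_[3])^(t+l+1) ∣
            x - (1 + 3^(l+1)*(i:ℤ_[3]) + 3^(l+2)*(a:ℤ_[3]))} =
          Metric.closedBall (1 + 3^(l+1)*(i:ℤ_[3]) + 3^(l+2)*(a:ℤ_[3]))
            ((1/3:ℝ)^(t+l+1)) := by
        ext x
        simp only [Set.mem_setOf_eq, Metric.mem_closedBall, dist_eq_norm]
        exact dvd_iff_norm_le _ _
      rw [hset]
      exact IsUltrametricDist.isClopen_closedBall _ (by positivity)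
    · intro x hx
      rw [hM] at hx ⊢
      simp only [Set.mem_setOf_eq] at hx ⊢
      have e1 := memVal t l i a ht1 hi x hx
      have hpow : (3:ℤ_[3])^(t+l+1) ∣ x^(m-1) - 1 := by
        have h := lemD (l+1) t (by omega) x e1.1 (m-1) hmt
        rwa [show l+1+t = t+l+1 by omega] at h
      have hxm : x * x^(m-1) = x^m := by rw [← pow_succ']; congr 1; omega
      have hsplit : x^m - (1 + 3^(l+1)*(i:ℤ_[3]) + 3^(l+2)*(a:ℤ_[3])) =
          x * (x^(m-1) - 1) + (x - (1 + 3^(l+1)*(i:ℤ_[3]) + 3^(l+2)*(a:ℤ_[3]))) := by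
        linear_combination -hxm
      rw [hsplit]
      exact dvd_add (hpow.mul_left x) hx
    · intro x hx z hz
      rw [hM] at hx hz
      simp only [Set.mem_setOf_eq] at hx hz
      have e1 := memVal t l i a ht1 hi x hx
      have e2 := memVal t l i a ht1 hi z hz
      have hz3 : (3:ℤ_[3]) ∣ z - 1 := dvd_trans (dvd_pow_self 3 (by omega : l+1 ≠ 0)) e2.1
      have hxz : (3:ℤ_[3])^(t+l+1) ∣ x - z := by
        have h := dvd_sub hx hz
        have h1 : (x - (1 + 3^(l+1)*(i:ℤ_[3]) + 3^(l+2)*(a:ℤ_[3]))) -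
            (z - (1 + 3^(l+1)*(i:ℤ_[3]) + 3^(l+2)*(a:ℤ_[3]))) = x - z := by ring
        rwa [h1] at h
      rw [Metric.mem_closure_iff]
      intro ε hε
      obtain ⟨k₀, hk₀⟩ := exists_pow_lt_of_lt_one hε (show (1/3:ℝ) < 1 by norm_num)
      obtain ⟨n, hn⟩ := density m t l hm ht1 hmt hmt2 x z e1.1 e1.2 hz3 hxz
        (max k₀ (t+l+1)) (le_max_right _ _)
      refine ⟨x ^ m ^ n, ⟨n, rfl⟩, ?_⟩
      rw [dist_eq_norm, norm_sub_rev]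
      have hle := (dvd_iff_norm_le _ _).mp hn
      calc ‖x ^ m ^ n - z‖ ≤ (1/3:ℝ)^(max k₀ (t+l+1)) := hle
        _ ≤ (1/3:ℝ)^k₀ := pow_le_pow_of_le_one (by norm_num) (by norm_num) (le_max_left _ _)
        _ < ε := hk₀
  · -- union
    ext x
    simp only [Set.mem_union, Set.mem_singleton_iff, Set.mem_setOf_eq]
    constructor
    · rintro (h | rfl)
      · obtain ⟨l, h⟩ := Set.mem_iUnion.mp h
        obtain ⟨a, ha, h⟩ := Set.mem_iUnion₂.mp h
        obtain ⟨i, hiS, h⟩ := Set.mem_iUnion₂.mp h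
        rw [hM] at h
        simp only [Set.mem_setOf_eq] at h
        have h1 : (3:ℤ_[3]) ∣ x - (1 + 3^(l+1)*(i:ℤ_[3]) + 3^(l+2)*(a:ℤ_[3])) :=
          dvd_trans (dvd_pow_self 3 (by omega : t+l+1 ≠ 0)) h
        have hsp : x - 1 = (x - (1 + 3^(l+1)*(i:ℤ_[3]) + 3^(l+2)*(a:ℤ_[3]))) +
            (3^(l+1)*(i:ℤ_[3]) + 3^(l+2)*(a:ℤ_[3])) := by ring
        rw [hsp]
        exact dvd_add h1 ⟨3^l*(i:ℤ_[3]) + 3^(l+1)*(a:ℤ_[3]), by ring⟩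
      · simp
    · intro hx3
      by_cases hx1 : x = 1
      · right; exact hx1
      · left
        have hex : ∃ s, ¬ (3:ℤ_[3])^s ∣ x - 1 := by
          by_contra hco
          push_neg at hco
          have hne : x - 1 ≠ 0 := sub_ne_zero.mpr hx1
          have hpos : 0 < ‖x - 1‖ := norm_pos_iff.mpr hne
          obtain ⟨s, hs⟩ := exists_pow_lt_of_lt_one hpos (show (1/3:ℝ) < 1 by norm_num)
          have := (dvd_iff_norm_le s (x-1)).mp (hco s)
          linarith
        have hfind : ¬ (3:ℤ_[3])^(Nat.find hex) ∣ x - 1 := Nat.find_spec hex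
        have hlt : ∀ s, s < Nat.find hex → (3:ℤ_[3])^s ∣ x - 1 :=
          fun s hs => not_not.mp (Nat.find_min hex hs)
        have hn2 : 2 ≤ Nat.find hex := by
          by_contra hcon
          push_neg at hcon
          apply hfind
          have h01 : Nat.find hex = 0 ∨ Nat.find hex = 1 := by omega
          rcases h01 with h|h <;> rw [h]
          · simp
          · simpa [pow_one] using hx3
        set l := Nat.find hex - 2 with hldef
        have hl1 : (3:ℤ_[3])^(l+1) ∣ x - 1 := hlt (l+1) (by omega)
        have hl2 : ¬ (3:ℤ_[3])^(l+2) ∣ x - 1 := by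
          have h := hfind
          rwa [show Nat.find hex = l + 2 by omega] at h
        obtain ⟨v, hv⟩ := hl1
        have hv3 : ¬ (3:ℤ_[3]) ∣ v := by
          rintro ⟨w, hw⟩
          exact hl2 ⟨w, by rw [hv, hw]; ring⟩
        haveI : NeZero (3^t) := ⟨by positivity⟩
        set r := (PadicInt.toZModPow t v).val with hrdef
        have hrlt : r < 3^t := ZMod.val_lt _
        have hvr : (3:ℤ_[3])^t ∣ v - (r:ℤ_[3]) := by
          have hval : ((r:ℕ) : ZMod (3^t)) = PadicInt.toZModPow t v :=
            ZMod.natCast_rightInverse _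
          have hker : v - (r:ℤ_[3]) ∈ RingHom.ker (PadicInt.toZModPow t) := by
            rw [RingHom.mem_ker, map_sub, map_natCast, hval, sub_self]
          rw [PadicInt.ker_toZModPow, Ideal.mem_span_singleton] at hker
          have c1 : (((3:ℕ)):ℤ_[3]) = 3 := by norm_cast
          rwa [c1] at hker
        have hr3 : ¬ (3 ∣ r) := by
          intro h
          apply hv3
          obtain ⟨q, hq⟩ := h
          have h1 : (3:ℤ_[3]) ∣ v - (r:ℤ_[3]) :=
            dvd_trans (dvd_pow_self 3 (by omega : t ≠ 0)) hvr
          have h2 : (3:ℤ_[3]) ∣ (r:ℤ_[3]) := ⟨(q:ℤ_[3]), by rw [hq]; push_cast; ring⟩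
          have h3 := dvd_add h1 h2
          simpa using h3
        have h3t : (3:ℕ)^t = 3 * 3^(t-1) := by rw [← pow_succ']; congr 1; omega
        refine Set.mem_iUnion.mpr ⟨l, ?_⟩
        refine Set.mem_iUnion₂.mpr ⟨r/3, Finset.mem_range.mpr (by omega), ?_⟩
        refine Set.mem_iUnion₂.mpr ⟨r % 3, ?_, ?_⟩
        · have : r % 3 = 1 ∨ r % 3 = 2 := by omega
          rcases this with h|h <;> rw [h] <;> simp
        · rw [hM]
          simp only [Set.mem_setOf_eq]
          have hia : r % 3 + 3 * (r/3) = r := by omega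
          have hiacast : ((r % 3 : ℕ):ℤ_[3]) + 3*((r/3 : ℕ):ℤ_[3]) = (r:ℤ_[3]) := by
            have hc := congrArg (fun n : ℕ => (n:ℤ_[3])) hia
            push_cast at hc
            exact hc
          obtain ⟨w, hw⟩ := hvr
          exact ⟨w, by linear_combination hv + 3^(l+1)*hw - 3^(l+1)*hiacast⟩
  · -- f maps 2 + 3ℤ₃ into 1 + 3ℤ₃
    intro x hx
    obtain ⟨s, hs⟩ : ∃ s, m = 2*s := ⟨m/2, by omega⟩
    have h2 : (3:ℤ_[3]) ∣ x^2 - 1 := by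
      have hfac : x^2 - 1 = (x - 2)*(x + 2) + 3 := by ring
      rw [hfac]
      exact dvd_add (hx.mul_right _) dvd_rfl
    rw [hs, pow_mul]
    exact geom 3 (x^2) h2 s
end
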